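/- arXiv:0807.1645 — 3 statements merged into one kernel-verified Lean document; each statement's English description precedes it below -/
import Mathlib

section
/- Let $U,V$ be vector spaces over an algebraically closed field $k$ of dimensions $r,s$ respectively, let $B \subseteq U$ be a nonzero subspace of codimension $b < r$ and $A \subseteq V$ a subspace of dimension $a < s$. Let $W \subseteq \mathrm{Hom}(U,V)$ be a $t$-dimensional linear subspace such that for every $u \in U$ and every $v \in V$ there exists $f \in W$ with $f(u) = v$. Then the subspace $\{f \in W : f(B) \subseteq A\}$ has dimension at most $t - r - s + a + b + 1$. -/
open Module

namespace TransAux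
open MvPolynomial
noncomputable section
variable {k : Type*} [Field k]
def wt (m n : ℕ) : (Fin m ⊕ Fin n) → ℕ × ℕ := Sum.elim (fun _ => (1,0)) (fun _ => (0,1))

variable (k) in
/-- The space of bihomogeneous polynomials of bidegree `(c,c)`. -/
def SS (m n c : ℕ) : Submodule k (MvPolynomial (Fin m ⊕ Fin n) k) :=
  weightedHomogeneousSubmodule k (wt m n) (c, c)

lemma weight_wt (m n : ℕ) (μ : (Fin m ⊕ Fin n) →₀ ℕ) :
    Finsupp.weight (wt m n) μ = (∑ i, μ (Sum.inl i), ∑ j, μ (Sum.inr j)) := by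
  rw [Finsupp.weight_apply, Finsupp.sum_fintype _ _ (by simp)]
  rw [Fintype.sum_sum_type]
  ext
  · simp [wt, Prod.fst_sum]
  · simp [wt, Prod.snd_sum]

lemma mem_SS_iff {m n c : ℕ} {p : MvPolynomial (Fin m ⊕ Fin n) k} :
    p ∈ SS k m n c ↔ ∀ μ, coeff μ p ≠ 0 → Finsupp.weight (wt m n) μ = (c, c) := by
  rfl

lemma SS_mul {m n c c' : ℕ} {p q : MvPolynomial (Fin m ⊕ Fin n) k}
    (hp : p ∈ SS k m n c) (hq : q ∈ SS k m n c') : p * q ∈ SS k m n (c + c') := by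
  have h := IsWeightedHomogeneous.mul (w := wt m n)
    ((mem_weightedHomogeneousSubmodule _ _ _ _).1 hp)
    ((mem_weightedHomogeneousSubmodule _ _ _ _).1 hq)
  rw [mem_SS_iff]
  intro μ hμ
  simpa [Prod.mk_add_mk] using h hμ

instance SS_findim (m n c : ℕ) : FiniteDimensional k (SS k m n c) := by
  apply Submodule.finiteDimensional_of_le
    (S₂ := restrictTotalDegree (Fin m ⊕ Fin n) k (2*c))
  intro p hp
  rw [mem_restrictTotalDegree]
  apply Finset.sup_le
  intro μ hμ
  have h := hp (mem_support_iff.1 hμ)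
  rw [weight_wt] at h
  have h1 : (∑ i, μ (Sum.inl i)) = c := congrArg Prod.fst h
  have h2 : (∑ j, μ (Sum.inr j)) = c := congrArg Prod.snd h
  have : (μ.sum fun _ e => e) = (∑ i, μ (Sum.inl i)) + (∑ j, μ (Sum.inr j)) := by
    rw [Finsupp.sum_fintype _ _ (by simp), Fintype.sum_sum_type]
  omega

lemma comp_mul {m n : ℕ} (b g : MvPolynomial (Fin m ⊕ Fin n) k) (hb : b ∈ SS k m n 1) (c : ℕ) :
    weightedHomogeneousComponent (wt m n) (c+1, c+1) (g * b) =
      (weightedHomogeneousComponent (wt m n) (c, c) g) * b := by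
  classical
  have hb' : IsWeightedHomogeneous (wt m n) b (1, 1) :=
    (mem_weightedHomogeneousSubmodule _ _ _ _).1 hb
  ext μ
  by_cases hμ : Finsupp.weight (wt m n) μ = ((c:ℕ)+1, (c:ℕ)+1)
  · rw [coeff_weightedHomogeneousComponent, if_pos hμ, coeff_mul, coeff_mul]
    apply Finset.sum_congr rfl
    rintro ⟨u, v⟩ huv
    rw [Finset.HasAntidiagonal.mem_antidiagonal] at huv
    rw [coeff_weightedHomogeneousComponent]
    by_cases hv : coeff v b = 0
    · simp [hv]
    · have hwv : Finsupp.weight (wt m n) v = (1,1) := hb' hv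
      have hsum : Finsupp.weight (wt m n) u + Finsupp.weight (wt m n) v = (c+1, c+1) := by
        rw [← map_add, huv, hμ]
      have hwu : Finsupp.weight (wt m n) u = (c, c) := by
        rw [hwv] at hsum
        have h1 := congrArg Prod.fst hsum
        have h2 := congrArg Prod.snd hsum
        simp only [Prod.fst_add, Prod.snd_add] at h1 h2
        ext <;> simp <;> omega
      rw [if_pos hwu]
  · rw [coeff_weightedHomogeneousComponent, if_neg hμ]
    symm
    rw [coeff_mul]
    apply Finset.sum_eq_zero
    rintro ⟨u, v⟩ huv
    rw [Finset.HasAntidiagonal.mem_antidiagonal] at huv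
    rw [coeff_weightedHomogeneousComponent]
    by_cases hv : coeff v b = 0
    · simp [hv]
    by_cases hu : Finsupp.weight (wt m n) u = (c, c)
    · exact absurd (by rw [← huv, map_add, hu, hb' hv, Prod.mk_add_mk]) hμ
    · rw [if_neg hu, zero_mul]

variable (k) in
def TT {m n : ℕ} {d : ℕ} (bb : Fin d → MvPolynomial (Fin m ⊕ Fin n) k)
    (I : Finset (Fin d)) : ℕ → Submodule k (MvPolynomial (Fin m ⊕ Fin n) k)
  | 0 => ⊥
  | (c+1) => ⨆ l ∈ I, (SS k m n c).map (LinearMap.mulRight k (bb l))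

lemma TT_le_SS {m n d : ℕ} {bb : Fin d → MvPolynomial (Fin m ⊕ Fin n) k}
    (hbb : ∀ l, bb l ∈ SS k m n 1) (I : Finset (Fin d)) (c : ℕ) :
    TT k bb I c ≤ SS k m n c := by
  cases c with
  | zero => exact bot_le
  | succ c =>
    apply iSup₂_le
    intro l _
    rintro x ⟨s, hs, rfl⟩
    exact SS_mul hs (hbb l)

lemma TT_zero {m n d : ℕ} (bb : Fin d → MvPolynomial (Fin m ⊕ Fin n) k)
    (I : Finset (Fin d)) : TT k bb I 0 = ⊥ := rfl

lemma TT_empty {m n d : ℕ} (bb : Fin d → MvPolynomial (Fin m ⊕ Fin n) k) (c : ℕ) :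
    TT k bb (∅ : Finset (Fin d)) c = ⊥ := by
  cases c with
  | zero => rfl
  | succ c' =>
    show (⨆ l ∈ (∅ : Finset (Fin d)), (SS k m n c').map (LinearMap.mulRight k (bb l))) = ⊥
    simp

lemma mem_TT {m n d : ℕ} {bb : Fin d → MvPolynomial (Fin m ⊕ Fin n) k}
    (hbb : ∀ l, bb l ∈ SS k m n 1) (c : ℕ) (p : MvPolynomial (Fin m ⊕ Fin n) k)
    (hp : p ∈ SS k m n (c+1)) (hpI : p ∈ Ideal.span (Set.range bb)) :
    p ∈ TT k bb Finset.univ (c+1) := by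
  obtain ⟨g, hg⟩ := Ideal.mem_span_range_iff_exists_fun.mp hpI
  have hp' : p = ∑ l, weightedHomogeneousComponent (wt m n) ((c:ℕ), (c:ℕ)) (g l) * bb l := by
    have h1 : p = weightedHomogeneousComponent (wt m n) (c+1, c+1) p :=
      (IsWeightedHomogeneous.weightedHomogeneousComponent_same
        ((mem_weightedHomogeneousSubmodule _ _ _ _).1 hp)).symm
    calc p = weightedHomogeneousComponent (wt m n) (c+1, c+1) p := h1
    _ = weightedHomogeneousComponent (wt m n) (c+1, c+1) (∑ l, g l * bb l) := by rw [hg]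
    _ = ∑ l, weightedHomogeneousComponent (wt m n) (c+1, c+1) (g l * bb l) := map_sum _ _ _
    _ = ∑ l, weightedHomogeneousComponent (wt m n) ((c:ℕ), (c:ℕ)) (g l) * bb l :=
        Finset.sum_congr rfl fun l _ => comp_mul (bb l) (g l) (hbb l) c
  rw [hp']
  apply Submodule.sum_mem
  intro l _
  have hmem : weightedHomogeneousComponent (wt m n) ((c:ℕ), (c:ℕ)) (g l) ∈ SS k m n c :=
    weightedHomogeneousComponent_mem _ _ _
  have : weightedHomogeneousComponent (wt m n) ((c:ℕ), (c:ℕ)) (g l) * bb l ∈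
      (SS k m n c).map (LinearMap.mulRight k (bb l)) :=
    ⟨_, hmem, rfl⟩
  exact Submodule.mem_iSup_of_mem l (Submodule.mem_iSup_of_mem (Finset.mem_univ l) this)


theorem TT_findim {m n d : ℕ} {bb : Fin d → MvPolynomial (Fin m ⊕ Fin n) k}
    (hbb : ∀ l, bb l ∈ SS k m n 1) (I : Finset (Fin d)) (c : ℕ) :
    FiniteDimensional k (TT k bb I c) :=
  Submodule.finiteDimensional_of_le (TT_le_SS hbb I c)

lemma TT_step {m n d : ℕ} {bb : Fin d → MvPolynomial (Fin m ⊕ Fin n) k}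
    (hbb : ∀ l, bb l ∈ SS k m n 1) (I : Finset (Fin d)) (l₀ : Fin d) (hl₀ : l₀ ∉ I) (c : ℕ) :
    finrank k (TT k bb (insert l₀ I) (c+1)) + finrank k (TT k bb I c)
      ≤ finrank k (TT k bb I (c+1)) + finrank k (SS k m n c) := by
  classical
  haveI := TT_findim (k := k) hbb I c
  haveI := TT_findim (k := k) hbb I (c+1)
  haveI := TT_findim (k := k) hbb (insert l₀ I) (c+1)
  set T : Submodule k (MvPolynomial (Fin m ⊕ Fin n) k) := TT k bb I (c+1) with hT
  set Bm : Submodule k (MvPolynomial (Fin m ⊕ Fin n) k) :=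
    (SS k m n c).map (LinearMap.mulRight k (bb l₀)) with hBm
  have hBm_le : Bm ≤ SS k m n (c+1) := by
    rintro x ⟨s, hs, rfl⟩
    exact SS_mul hs (hbb l₀)
  haveI : FiniteDimensional k Bm := Submodule.finiteDimensional_of_le hBm_le
  haveI : FiniteDimensional k (Bm ⊓ T : Submodule k _) :=
    Submodule.finiteDimensional_of_le (le_trans inf_le_left hBm_le)
  have hins : TT k bb (insert l₀ I) (c+1) = Bm ⊔ T := by
    show (⨆ l ∈ insert l₀ I, (SS k m n c).map (LinearMap.mulRight k (bb l))) = _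
    rw [Finset.iSup_insert]
    rfl
  -- the restriction of multiplication by bb l₀ to SS c
  set f : (SS k m n c) →ₗ[k] MvPolynomial (Fin m ⊕ Fin n) k :=
    (LinearMap.mulRight k (bb l₀)).domRestrict (SS k m n c) with hf
  have hrangef : LinearMap.range f = Bm := LinearMap.range_domRestrict _ _
  have hrn1 : finrank k Bm + finrank k (LinearMap.ker f) = finrank k (SS k m n c) := by
    rw [← hrangef]
    exact LinearMap.finrank_range_add_finrank_ker f
  -- the restriction to TT I c
  set f' : (TT k bb I c) →ₗ[k] MvPolynomial (Fin m ⊕ Fin n) k :=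
    (LinearMap.mulRight k (bb l₀)).domRestrict (TT k bb I c) with hf'
  set J : Submodule k (MvPolynomial (Fin m ⊕ Fin n) k) :=
    (TT k bb I c).map (LinearMap.mulRight k (bb l₀)) with hJ
  have hrangef' : LinearMap.range f' = J := LinearMap.range_domRestrict _ _
  haveI : FiniteDimensional k J := by
    rw [← hrangef']; infer_instance
  have hrn2 : finrank k J + finrank k (LinearMap.ker f') = finrank k (TT k bb I c) := by
    rw [← hrangef']
    exact LinearMap.finrank_range_add_finrank_ker f'
  -- J ≤ Bm
  have hJBm : J ≤ Bm := Submodule.map_mono (TT_le_SS hbb I c)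
  -- J ≤ T
  have hJT : J ≤ T := by
    rw [hJ, Submodule.map_le_iff_le_comap]
    cases c with
    | zero => exact bot_le
    | succ c' =>
      apply iSup₂_le
      intro l hl
      rintro x ⟨s, hs, rfl⟩
      have : (s * bb l) * bb l₀ = (s * bb l₀) * bb l := mul_right_comm s (bb l) (bb l₀)
      simp only [Submodule.mem_comap, LinearMap.mulRight_apply, this]
      have hmem : (s * bb l₀) * bb l ∈ (SS k m n (c'+1)).map (LinearMap.mulRight k (bb l)) :=
        ⟨s * bb l₀, SS_mul hs (hbb l₀), rfl⟩
      exact Submodule.mem_iSup_of_mem l (Submodule.mem_iSup_of_mem hl hmem)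
  -- kernel comparison
  have hker : finrank k (LinearMap.ker f') ≤ finrank k (LinearMap.ker f) := by
    have hincl : ∀ x : LinearMap.ker f',
        ((x : TT k bb I c) : MvPolynomial (Fin m ⊕ Fin n) k) ∈ SS k m n c :=
      fun x => TT_le_SS hbb I c (x : TT k bb I c).2
    let ψ : LinearMap.ker f' →ₗ[k] LinearMap.ker f :=
      { toFun := fun x => ⟨⟨((x : TT k bb I c) : MvPolynomial (Fin m ⊕ Fin n) k), hincl x⟩, by
          have hx := x.2
          simp only [LinearMap.mem_ker, hf', LinearMap.domRestrict_apply] at hx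
          simp only [LinearMap.mem_ker, hf, LinearMap.domRestrict_apply]
          exact hx⟩
        map_add' := fun x y => by ext; rfl
        map_smul' := fun r x => by ext; rfl }
    have hψ : Function.Injective ψ := by
      intro x y hxy
      have h1 := congrArg
        (fun z : LinearMap.ker f => ((z : SS k m n c) : MvPolynomial (Fin m ⊕ Fin n) k)) hxy
      exact Subtype.ext (Subtype.ext h1)
    exact LinearMap.finrank_le_finrank_of_injective hψ
  -- sup/inf dimension formula
  have hsup : finrank k (Bm ⊔ T : Submodule k _) + finrank k (Bm ⊓ T : Submodule k _)
      = finrank k Bm + finrank k T := Submodule.finrank_sup_add_finrank_inf_eq Bm T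
  have hJinf : finrank k J ≤ finrank k (Bm ⊓ T : Submodule k _) :=
    Submodule.finrank_mono (le_inf hJBm hJT)
  rw [hins]
  omega

/-- Abstract growth bound: if a filtration `t` of "graded pieces of an ideal generated by `d`
elements" exhausts `s` in large degrees, then `s` has polynomial growth of degree `d-1`. -/
lemma abstract_growth (d : ℕ) (t : Finset (Fin d) → ℕ → ℕ) (s : ℕ → ℕ) (C₀ K : ℕ)
    (hstep : ∀ I l₀, l₀ ∉ I → ∀ c, t (insert l₀ I) (c+1) + t I c ≤ t I (c+1) + s c)
    (htle : ∀ I c, t I c ≤ s c)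
    (ht0 : ∀ I, t I 0 = 0)
    (hK : ∀ c, c < C₀ → s c ≤ K)
    (huniv : ∀ c, C₀ ≤ c → t Finset.univ c = s c)
    (hempty : ∀ c, t ∅ c = 0) :
    ∀ c, s c ≤ (C₀ * K) * (c+1)^(d-1) := by
  classical
  set g : Finset (Fin d) → ℕ → ℕ := fun I c => s c - t I c with hg
  have grec : ∀ I l₀, l₀ ∉ I → ∀ c, g I (c+1) ≤ g (insert l₀ I) (c+1) + g I c := by
    intro I l₀ hl c
    have h1 := hstep I l₀ hl c
    have h2 := htle (insert l₀ I) (c+1)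
    have h3 := htle I (c+1)
    have h4 := htle I c
    simp only [hg]
    omega
  have gunroll : ∀ I l₀, l₀ ∉ I → ∀ c,
      g I c ≤ ∑ j ∈ Finset.range (c+1), g (insert l₀ I) j := by
    intro I l₀ hl c
    induction c with
    | zero =>
      simp [hg, ht0 I, ht0 (insert l₀ I)]
    | succ c ih =>
      calc g I (c+1) ≤ g (insert l₀ I) (c+1) + g I c := grec I l₀ hl c
      _ ≤ g (insert l₀ I) (c+1) + ∑ j ∈ Finset.range (c+1), g (insert l₀ I) j := by omega
      _ ≤ ∑ j ∈ Finset.range (c+2), g (insert l₀ I) j := by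
          rw [Finset.sum_range_succ (fun j => g (insert l₀ I) j) (c+1)]
          omega
  have gKuniv : ∀ c, g Finset.univ c ≤ K ∧ (C₀ ≤ c → g Finset.univ c = 0) := by
    intro c
    constructor
    · by_cases hc : C₀ ≤ c
      · have := huniv c hc
        simp only [hg]
        omega
      · have := hK c (by omega)
        simp only [hg]
        omega
    · intro hc
      have := huniv c hc
      simp only [hg]
      omega
  have gsumuniv : ∀ c, ∑ j ∈ Finset.range (c+1), g Finset.univ j ≤ C₀ * K := by
    intro c
    calc ∑ j ∈ Finset.range (c+1), g Finset.univ j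
        ≤ ∑ j ∈ Finset.range (c+1), (if j < C₀ then K else 0) := by
          apply Finset.sum_le_sum
          intro j _
          by_cases hj : j < C₀
          · rw [if_pos hj]; exact (gKuniv j).1
          · rw [if_neg hj, (gKuniv j).2 (by omega)]
      _ = ∑ j ∈ (Finset.range (c+1)).filter (· < C₀), K := by
          rw [Finset.sum_filter]
      _ ≤ C₀ * K := by
          rw [Finset.sum_const, smul_eq_mul]
          apply Nat.mul_le_mul_right
          calc ((Finset.range (c+1)).filter (· < C₀)).card
              ≤ (Finset.range C₀).card := by
                apply Finset.card_le_card
                intro x hx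
                simp only [Finset.mem_filter, Finset.mem_range] at hx ⊢
                exact hx.2
            _ = C₀ := Finset.card_range C₀
  -- first step: one element missing gives a constant bound
  have hone : ∀ I : Finset (Fin d), I.card + 1 = d → ∀ c, g I c ≤ C₀ * K := by
    intro I hI c
    obtain ⟨l₀, hl₀⟩ : ∃ l₀, l₀ ∉ I := by
      by_contra hall
      push_neg at hall
      have : I = Finset.univ := Finset.eq_univ_iff_forall.2 hall
      rw [this, Finset.card_univ, Fintype.card_fin] at hI
      omega
    have huniv' : insert l₀ I = Finset.univ := by
      apply Finset.eq_univ_of_card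
      rw [Finset.card_insert_of_notMem hl₀, Fintype.card_fin]
      omega
    calc g I c ≤ ∑ j ∈ Finset.range (c+1), g (insert l₀ I) j := gunroll I l₀ hl₀ c
      _ = ∑ j ∈ Finset.range (c+1), g Finset.univ j := by rw [huniv']
      _ ≤ C₀ * K := gsumuniv c
  -- main induction
  have hmain : ∀ i : ℕ, ∀ I : Finset (Fin d), I.card + (i+1) = d →
      ∀ c, g I c ≤ (C₀ * K) * (c+1)^i := by
    intro i
    induction i with
    | zero =>
      intro I hI c
      simpa using hone I hI c
    | succ i ih =>
      intro I hI c
      obtain ⟨l₀, hl₀⟩ : ∃ l₀, l₀ ∉ I := by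
        by_contra hall
        push_neg at hall
        have : I = Finset.univ := Finset.eq_univ_iff_forall.2 hall
        rw [this, Finset.card_univ, Fintype.card_fin] at hI
        omega
      have hcard : (insert l₀ I).card + (i+1) = d := by
        rw [Finset.card_insert_of_notMem hl₀]
        omega
      calc g I c ≤ ∑ j ∈ Finset.range (c+1), g (insert l₀ I) j := gunroll I l₀ hl₀ c
        _ ≤ ∑ j ∈ Finset.range (c+1), (C₀ * K) * (c+1)^i := by
            apply Finset.sum_le_sum
            intro j hj
            calc g (insert l₀ I) j ≤ (C₀ * K) * (j+1)^i := ih (insert l₀ I) hcard j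
              _ ≤ (C₀ * K) * (c+1)^i := by
                  apply Nat.mul_le_mul_left
                  apply Nat.pow_le_pow_left
                  simp only [Finset.mem_range] at hj
                  omega
        _ = (c+1) * ((C₀ * K) * (c+1)^i) := by
            rw [Finset.sum_const, Finset.card_range, smul_eq_mul]
        _ = (C₀ * K) * (c+1)^(i+1) := by ring
  intro c
  have hsg : s c = g ∅ c := by
    simp [hg, hempty c]
  rw [hsg]
  cases d with
  | zero =>
    have : (∅ : Finset (Fin 0)) = Finset.univ := by
      apply Finset.eq_univ_of_card; simp
    rw [this]
    by_cases hC : C₀ = 0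
    · have h0 := (gKuniv c).2 (by omega)
      rw [h0]
      exact Nat.zero_le _
    · have h1 := (gKuniv c).1
      have h2 : K ≤ C₀ * K := Nat.le_mul_of_pos_left K (by omega)
      simpa using h1.trans h2
  | succ d' =>
    have := hmain d' ∅ (by simp) c
    simpa using this

lemma SS_finrank_lb (m' n' c : ℕ) :
    (c / (m' + 1 + (n' + 1)) + 1)^(m' + n') ≤ finrank k (SS k (m'+1) (n'+1) c) := by
  classical
  set m := m' + 1 with hm
  set n := n' + 1 with hn
  set L := m + n with hL
  set q := c / L with hq
  -- vector construction
  let va : (Fin m' → Fin (q+1)) → Fin m → ℕ :=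
    fun α => Fin.snoc (fun i => (α i : ℕ)) (c - ∑ i, (α i : ℕ))
  let vb : (Fin n' → Fin (q+1)) → Fin n → ℕ :=
    fun β => Fin.snoc (fun j => (β j : ℕ)) (c - ∑ j, (β j : ℕ))
  have hsum : ∀ (N' : ℕ) (γ : Fin N' → Fin (q+1)), N' + 1 ≤ L → (∑ i, (γ i : ℕ)) ≤ c := by
    intro N' γ hN'
    calc (∑ i, (γ i : ℕ)) ≤ ∑ _i : Fin N', q := Finset.sum_le_sum fun i _ => Fin.is_le _
      _ = N' * q := by rw [Finset.sum_const, Finset.card_univ, Fintype.card_fin, smul_eq_mul]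
      _ ≤ L * q := Nat.mul_le_mul_right q (by omega)
      _ ≤ c := by rw [hq]; exact Nat.mul_div_le c L
  have hva : ∀ α, ∑ i, va α i = c := by
    intro α
    have h1 := hsum m' α (by omega)
    rw [Fin.sum_univ_castSucc]
    simp only [va, Fin.snoc_castSucc, Fin.snoc_last]
    omega
  have hvb : ∀ β, ∑ j, vb β j = c := by
    intro β
    have h1 := hsum n' β (by omega)
    rw [Fin.sum_univ_castSucc]
    simp only [vb, Fin.snoc_castSucc, Fin.snoc_last]
    omega
  let idx := (Fin m' → Fin (q+1)) × (Fin n' → Fin (q+1))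
  let μf : idx → ((Fin m ⊕ Fin n) →₀ ℕ) :=
    fun p => Finsupp.equivFunOnFinite.symm (Sum.elim (va p.1) (vb p.2))
  have hμapp : ∀ p a, μf p a = Sum.elim (va p.1) (vb p.2) a := fun p a => rfl
  have hμw : ∀ p, Finsupp.weight (wt m n) (μf p) = ((c:ℕ), (c:ℕ)) := by
    intro p
    rw [weight_wt]
    have h1 : (∑ i, μf p (Sum.inl i)) = c := by
      simp only [hμapp, Sum.elim_inl]
      exact hva p.1
    have h2 : (∑ j, μf p (Sum.inr j)) = c := by
      simp only [hμapp, Sum.elim_inr]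
      exact hvb p.2
    rw [h1, h2]
  have hinj : Function.Injective μf := by
    intro p p' h
    have h' : Sum.elim (va p.1) (vb p.2) = Sum.elim (va p'.1) (vb p'.2) :=
      Finsupp.equivFunOnFinite.symm.injective h
    have hA : ∀ i : Fin m', p.1 i = p'.1 i := by
      intro i
      have := congrFun h' (Sum.inl i.castSucc)
      simp only [Sum.elim_inl, va, Fin.snoc_castSucc] at this
      exact Fin.ext this
    have hB : ∀ j : Fin n', p.2 j = p'.2 j := by
      intro j
      have := congrFun h' (Sum.inr j.castSucc)
      simp only [Sum.elim_inr, vb, Fin.snoc_castSucc] at this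
      exact Fin.ext this
    exact Prod.ext (funext hA) (funext hB)
  let v : idx → (SS k m n c) := fun p =>
    ⟨monomial (μf p) 1, isWeightedHomogeneous_monomial _ _ _ (hμw p)⟩
  have hv : LinearIndependent k v := by
    apply LinearIndependent.of_comp (SS k m n c).subtype
    have : ((SS k m n c).subtype ∘ v) = (fun μ => (monomial μ (1:k))) ∘ μf := rfl
    rw [this]
    have hb := (basisMonomials (Fin m ⊕ Fin n) k).linearIndependent
    have : (fun μ => (monomial μ (1:k))) = ⇑(basisMonomials (Fin m ⊕ Fin n) k) := by
      funext μ
      rw [coe_basisMonomials]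
    rw [this]
    exact hb.comp μf hinj
  have hcard := hv.fintype_card_le_finrank
  calc (q+1)^(m'+n') = Fintype.card idx := by
        simp only [idx, Fintype.card_prod, Fintype.card_fun, Fintype.card_fin]
        rw [pow_add]
    _ ≤ finrank k (SS k m n c) := hcard

lemma monomial_mem {m n : ℕ} (hm : 1 ≤ m) (hn : 1 ≤ n) (M : ℕ) (hM : 1 ≤ M)
    (I : Ideal (MvPolynomial (Fin m ⊕ Fin n) k))
    (HM : ∀ i j, ((X (Sum.inl i) * X (Sum.inr j) : MvPolynomial (Fin m ⊕ Fin n) k))^M ∈ I)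
    (c : ℕ) (hc : (m+n)*M ≤ c) :
    ∀ p ∈ SS k m n c, p ∈ I := by
  classical
  intro p hp
  rw [← support_sum_monomial_coeff p]
  apply Submodule.sum_mem
  intro μ hμ
  have hw := hp (mem_support_iff.1 hμ)
  rw [weight_wt] at hw
  have h1 : (∑ i, μ (Sum.inl i)) = c := congrArg Prod.fst hw
  have h2 : (∑ j, μ (Sum.inr j)) = c := congrArg Prod.snd hw
  have hc' : m * M + n * M ≤ c := by
    calc m*M + n*M = (m+n)*M := by ring
      _ ≤ c := hc
  obtain ⟨i, hi⟩ : ∃ i, M ≤ μ (Sum.inl i) := by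
    by_contra hcon
    push_neg at hcon
    have hs : (∑ i, μ (Sum.inl i)) + m ≤ m * M := by
      calc (∑ i, μ (Sum.inl i)) + m = ∑ i : Fin m, (μ (Sum.inl i) + 1) := by
            rw [Finset.sum_add_distrib, Finset.sum_const, Finset.card_univ,
              Fintype.card_fin, smul_eq_mul, mul_one]
        _ ≤ ∑ _i : Fin m, M := Finset.sum_le_sum fun i _ => hcon i
        _ = m * M := by
            rw [Finset.sum_const, Finset.card_univ, Fintype.card_fin, smul_eq_mul]
    have hnM : 0 < n * M := Nat.mul_pos (by omega) (by omega)
    linarith [hs, h1, hc', hnM]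
  obtain ⟨j, hj⟩ : ∃ j, M ≤ μ (Sum.inr j) := by
    by_contra hcon
    push_neg at hcon
    have hs : (∑ j, μ (Sum.inr j)) + n ≤ n * M := by
      calc (∑ j, μ (Sum.inr j)) + n = ∑ j : Fin n, (μ (Sum.inr j) + 1) := by
            rw [Finset.sum_add_distrib, Finset.sum_const, Finset.card_univ,
              Fintype.card_fin, smul_eq_mul, mul_one]
        _ ≤ ∑ _j : Fin n, M := Finset.sum_le_sum fun j _ => hcon j
        _ = n * M := by
            rw [Finset.sum_const, Finset.card_univ, Fintype.card_fin, smul_eq_mul]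
    have hmM : 0 < m * M := Nat.mul_pos (by omega) (by omega)
    linarith [hs, h2, hc', hmM]
  set κ : (Fin m ⊕ Fin n) →₀ ℕ :=
    Finsupp.single (Sum.inl i) M + Finsupp.single (Sum.inr j) M with hκ
  have hκμ : κ ≤ μ := by
    rw [Finsupp.le_def]
    intro a
    rcases a with i' | j'
    · by_cases hii : i = i'
      · subst hii
        have hval : κ (Sum.inl i) = M := by simp [hκ, Finsupp.single_apply]
        rw [hval]; exact hi
      · have hval : κ (Sum.inl i') = 0 := by simp [hκ, Finsupp.single_apply, hii]
        rw [hval]; exact Nat.zero_le _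
    · by_cases hjj : j = j'
      · subst hjj
        have hval : κ (Sum.inr j) = M := by simp [hκ, Finsupp.single_apply]
        rw [hval]; exact hj
      · have hval : κ (Sum.inr j') = 0 := by simp [hκ, Finsupp.single_apply, hjj]
        rw [hval]; exact Nat.zero_le _
  obtain ⟨ν, hν⟩ := le_iff_exists_add.1 hκμ
  have key : monomial μ (coeff μ p)
      = ((X (Sum.inl i) * X (Sum.inr j) : MvPolynomial (Fin m ⊕ Fin n) k))^M
        * monomial ν (coeff μ p) := by
    rw [mul_pow, X_pow_eq_monomial, X_pow_eq_monomial, monomial_mul, monomial_mul,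
      one_mul, one_mul, ← hκ, ← hν]
  rw [key]
  exact Ideal.mul_mem_right _ _ (HM i j)

set_option maxHeartbeats 3200000 in
theorem poly_core [IsAlgClosed k] (m' n' d : ℕ) (hd : d ≤ m' + n')
    (bb : Fin d → MvPolynomial (Fin (m'+1) ⊕ Fin (n'+1)) k)
    (hbb : ∀ l, bb l ∈ SS k (m'+1) (n'+1) 1) :
    ∃ z : (Fin (m'+1) ⊕ Fin (n'+1)) → k,
      (∀ l, eval z (bb l) = 0) ∧ (∃ i, z (Sum.inl i) ≠ 0) ∧ (∃ j, z (Sum.inr j) ≠ 0) := by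
  classical
  cases d with
  | zero =>
    exact ⟨fun _ => 1, fun l => l.elim0, ⟨0, one_ne_zero⟩, ⟨0, one_ne_zero⟩⟩
  | succ d'' =>
  by_contra hcon
  push_neg at hcon
  have harg1 : ∀ (J : Finset (Fin (d''+1))) (l₀ : Fin (d''+1)), l₀ ∉ J → ∀ c : ℕ,
      finrank k (TT k bb (insert l₀ J) (c+1)) + finrank k (TT k bb J c)
        ≤ finrank k (TT k bb J (c+1)) + finrank k (SS k (m'+1) (n'+1) c) :=
    fun J l₀ hl₀ c => TT_step hbb J l₀ hl₀ c
  have harg2 : ∀ (J : Finset (Fin (d''+1))) (c : ℕ),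
      finrank k (TT k bb J c) ≤ finrank k (SS k (m'+1) (n'+1) c) := fun J c => by
    haveI := TT_findim (k := k) hbb J c
    exact Submodule.finrank_mono (TT_le_SS hbb J c)
  have harg3 : ∀ J : Finset (Fin (d''+1)), finrank k (TT k bb J 0) = 0 := fun J => by
    rw [TT_zero, finrank_bot]
  set I := Ideal.span (Set.range bb) with hI
  have hXmem : ∀ (i : Fin (m'+1)) (j : Fin (n'+1)),
      (X (Sum.inl i) * X (Sum.inr j) : MvPolynomial (Fin (m'+1) ⊕ Fin (n'+1)) k)
        ∈ vanishingIdeal k (zeroLocus k I) := by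
    intro i j
    rw [mem_vanishingIdeal_iff]
    intro z hz
    have hbz : ∀ l, eval z (bb l) = 0 := fun l => by
      simpa [MvPolynomial.coe_aeval_eq_eval] using
        hz (bb l) (Ideal.subset_span (Set.mem_range_self l))
    by_cases hex : ∃ i', z (Sum.inl i') ≠ 0
    · have hj := hcon z hbz hex j
      simp [hj]
    · push_neg at hex
      simp [hex i]
  have hXrad : ∀ (i : Fin (m'+1)) (j : Fin (n'+1)), ∃ N : ℕ,
      ((X (Sum.inl i) * X (Sum.inr j) : MvPolynomial (Fin (m'+1) ⊕ Fin (n'+1)) k))^N ∈ I := by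
    intro i j
    have h := hXmem i j
    rw [vanishingIdeal_zeroLocus_eq_radical] at h
    exact Ideal.mem_radical_iff.1 h
  choose F hF using fun (p : Fin (m'+1) × Fin (n'+1)) => hXrad p.1 p.2
  set M : ℕ := (Finset.univ.sup F) + 1 with hMdef
  have hM : 1 ≤ M := Nat.le_add_left 1 _
  have HM : ∀ (i : Fin (m'+1)) (j : Fin (n'+1)),
      ((X (Sum.inl i) * X (Sum.inr j) : MvPolynomial (Fin (m'+1) ⊕ Fin (n'+1)) k))^M ∈ I := by
    intro i j
    have hle : F (i, j) ≤ M := by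
      have := Finset.le_sup (f := F) (Finset.mem_univ (i, j))
      omega
    have heq : ((X (Sum.inl i) * X (Sum.inr j) : MvPolynomial (Fin (m'+1) ⊕ Fin (n'+1)) k))^M
        = ((X (Sum.inl i) * X (Sum.inr j))^(F (i,j)))
          * ((X (Sum.inl i) * X (Sum.inr j))^(M - F (i,j))) := by
      rw [← pow_add]
      congr 1
      omega
    rw [heq]
    exact Ideal.mul_mem_right _ _ (hF (i, j))
  set C₀ : ℕ := ((m'+1) + (n'+1)) * M with hC₀
  have hC₀pos : 1 ≤ C₀ := by
    have h11 : 1 * 1 ≤ ((m'+1) + (n'+1)) * M := Nat.mul_le_mul (by omega) hM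
    omega
  set K : ℕ := (Finset.range C₀).sup (fun j => finrank k (SS k (m'+1) (n'+1) j)) with hK
  -- apply the abstract growth lemma
  have harg4 : ∀ c : ℕ, c < C₀ → finrank k (SS k (m'+1) (n'+1) c) ≤ K :=
    fun c hc => Finset.le_sup (f := fun j => finrank k (SS k (m'+1) (n'+1) j))
      (Finset.mem_range.2 hc)
  have harg5 : ∀ c : ℕ, C₀ ≤ c →
      finrank k (TT k bb Finset.univ c) = finrank k (SS k (m'+1) (n'+1) c) := by
    intro c hc
    obtain ⟨c', rfl⟩ : ∃ c', c = c' + 1 := ⟨c - 1, by omega⟩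
    have hle1 : TT k bb Finset.univ (c'+1) ≤ SS k (m'+1) (n'+1) (c'+1) := TT_le_SS hbb _ _
    have hle2 : SS k (m'+1) (n'+1) (c'+1) ≤ TT k bb Finset.univ (c'+1) := by
      intro p hp
      exact mem_TT hbb c' p hp
        (monomial_mem (by omega) (by omega) M hM I HM (c'+1) (by omega) p hp)
    rw [le_antisymm hle1 hle2]
  have harg6 : ∀ c : ℕ, finrank k (TT k bb (∅ : Finset (Fin (d''+1))) c) = 0 := fun c => by
    rw [TT_empty, finrank_bot]
  have Hup := abstract_growth (d''+1) (fun J c => finrank k (TT k bb J c))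
    (fun c => finrank k (SS k (m'+1) (n'+1) c)) C₀ K harg1 harg2 harg3 harg4 harg5 harg6
  -- final numeric contradiction
  set L := (m'+1) + (n'+1) with hL
  set e := m' + n' with he
  have he1 : 1 ≤ e := by omega
  set KK := C₀ * K with hKK
  set c := KK * L ^ e with hc
  have f1 : (c / L + 1)^e ≤ finrank k (SS k (m'+1) (n'+1) c) := SS_finrank_lb m' n' c
  have f2 : finrank k (SS k (m'+1) (n'+1) c) ≤ KK * (c+1)^(d''+1-1) := Hup c
  have f3 : c + 1 ≤ (c / L + 1) * L := by
    have hd1 := Nat.div_add_mod c L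
    have hd2 : c % L < L := Nat.mod_lt c (by omega)
    have e3 : (c / L + 1) * L = L * (c / L) + L := by ring
    omega
  have f4 : (c+1)^e ≤ KK * L^e * (c+1)^(e-1) := by
    calc (c+1)^e ≤ ((c/L + 1) * L)^e := Nat.pow_le_pow_left f3 e
      _ = (c/L + 1)^e * L^e := by rw [mul_pow]
      _ ≤ finrank k (SS k (m'+1) (n'+1) c) * L^e := Nat.mul_le_mul_right _ f1
      _ ≤ (KK * (c+1)^(d''+1-1)) * L^e := Nat.mul_le_mul_right _ f2
      _ ≤ (KK * (c+1)^(e-1)) * L^e := by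
          apply Nat.mul_le_mul_right
          apply Nat.mul_le_mul_left
          exact Nat.pow_le_pow_right (by omega) (by omega)
      _ = KK * L^e * (c+1)^(e-1) := by ring
  have f5 : (c+1)^e = (c+1) * (c+1)^(e-1) := by
    conv_lhs => rw [show e = (e-1) + 1 by omega]
    rw [pow_succ]
    ring
  rw [f5] at f4
  have f6 : c + 1 ≤ KK * L^e := by
    have hpos : 0 < (c+1)^(e-1) := pow_pos (by omega) _
    exact Nat.le_of_mul_le_mul_right
      (by calc (c+1) * (c+1)^(e-1) ≤ KK * L^e * (c+1)^(e-1) := f4) hpos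
  omega

set_option maxHeartbeats 1600000 in
/-- **Key lemma**: a transitive space of linear maps over an algebraically closed field
has dimension at least `dim B + dim C - 1`. -/
theorem key_transitive [IsAlgClosed k] {B C : Type*} [AddCommGroup B] [Module k B]
    [AddCommGroup C] [Module k C] [FiniteDimensional k B] [FiniteDimensional k C]
    (hB : 0 < finrank k B) (hC : 0 < finrank k C)
    (T : Submodule k (B →ₗ[k] C))
    (htrans : ∀ u : B, u ≠ 0 → ∀ v : C, ∃ f ∈ T, f u = v) :
    finrank k B + finrank k C ≤ finrank k T + 1 := by
  classical
  by_contra hcon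
  push_neg at hcon
  obtain ⟨m', hm'⟩ : ∃ m', finrank k B = m' + 1 := ⟨finrank k B - 1, by omega⟩
  obtain ⟨n', hn'⟩ : ∃ n', finrank k C = n' + 1 := ⟨finrank k C - 1, by omega⟩
  set d := finrank k T with hd
  have hdle : d ≤ m' + n' := by omega
  let e : Basis (Fin (m'+1)) k B := Module.finBasisOfFinrankEq k B hm'
  let cb : Basis (Fin (n'+1)) k C := Module.finBasisOfFinrankEq k C hn'
  let φ : Basis (Fin d) k T := Module.finBasisOfFinrankEq k T hd.symm
  let bb : Fin d → MvPolynomial (Fin (m'+1) ⊕ Fin (n'+1)) k := fun l =>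
    ∑ i, ∑ j, (cb.repr ((φ l : B →ₗ[k] C) (e i)) j) • (X (Sum.inl i) * X (Sum.inr j))
  have hXX : ∀ (i : Fin (m'+1)) (j : Fin (n'+1)),
      (X (Sum.inl i) * X (Sum.inr j) : MvPolynomial (Fin (m'+1) ⊕ Fin (n'+1)) k)
        ∈ SS k (m'+1) (n'+1) 1 := by
    intro i j
    have h1 := isWeightedHomogeneous_X k (wt (m'+1) (n'+1)) (Sum.inl i)
    have h2 := isWeightedHomogeneous_X k (wt (m'+1) (n'+1)) (Sum.inr j)
    have h3 := h1.mul h2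
    have hw1 : wt (m'+1) (n'+1) (Sum.inl i) = ((1:ℕ), (0:ℕ)) := rfl
    have hw2 : wt (m'+1) (n'+1) (Sum.inr j) = ((0:ℕ), (1:ℕ)) := rfl
    rw [hw1, hw2] at h3
    rw [mem_SS_iff]
    intro μ hμ
    simpa [Prod.mk_add_mk] using h3 hμ
  have hbb : ∀ l, bb l ∈ SS k (m'+1) (n'+1) 1 := by
    intro l
    apply Submodule.sum_mem
    intro i _
    apply Submodule.sum_mem
    intro j _
    exact Submodule.smul_mem _ _ (hXX i j)
  obtain ⟨z, hz0, ⟨i0, hi0⟩, ⟨j0, hj0⟩⟩ := poly_core m' n' d hdle bb hbb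
  let zu : Fin (m'+1) → k := fun i => z (Sum.inl i)
  let u : B := e.equivFun.symm zu
  have hu : u ≠ 0 := by
    intro h
    have hz : zu = 0 := by
      apply e.equivFun.symm.injective
      rw [map_zero]
      exact h
    exact hi0 (congrFun hz i0)
  have hu_expand : ∀ (g : B →ₗ[k] C), g u = ∑ i, zu i • g (e i) := by
    intro g
    have hueq : u = ∑ i, zu i • e i := e.equivFun_symm_apply zu
    rw [hueq, map_sum]
    simp [map_smul]
  have heval : ∀ l, eval z (bb l)
      = ∑ i, ∑ j, (cb.repr ((φ l : B →ₗ[k] C) (e i)) j) * (z (Sum.inl i) * z (Sum.inr j)) := by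
    intro l
    simp only [bb, map_sum, smul_eq_C_mul, eval_mul, eval_C, eval_X]
  let Ψ : T →ₗ[k] k :=
    { toFun := fun F => ∑ j, z (Sum.inr j) * (cb.repr ((F : B →ₗ[k] C) u) j)
      map_add' := fun F G => by
        simp only [Submodule.coe_add, LinearMap.add_apply, map_add, Finsupp.add_apply,
          mul_add, Finset.sum_add_distrib]
      map_smul' := fun r F => by
        simp only [Submodule.coe_smul, LinearMap.smul_apply, map_smul, Finsupp.smul_apply,
          smul_eq_mul, RingHom.id_apply, Finset.mul_sum]
        apply Finset.sum_congr rfl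
        intro j _
        ring }
  have hΨφ : ∀ l, Ψ (φ l) = eval z (bb l) := by
    intro l
    show (∑ j, z (Sum.inr j) * (cb.repr ((φ l : B →ₗ[k] C) u) j)) = _
    rw [heval l]
    have hrepr : ∀ j, cb.repr ((φ l : B →ₗ[k] C) u) j
        = ∑ i, zu i * cb.repr ((φ l : B →ₗ[k] C) (e i)) j := by
      intro j
      rw [hu_expand]
      rw [map_sum, Finsupp.finset_sum_apply]
      apply Finset.sum_congr rfl
      intro i _
      rw [map_smul, Finsupp.smul_apply, smul_eq_mul]
    simp_rw [hrepr, Finset.mul_sum]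
    rw [Finset.sum_comm]
    apply Finset.sum_congr rfl
    intro i _
    apply Finset.sum_congr rfl
    intro j _
    show z (Sum.inr j) * (zu i * _) = _ * (z (Sum.inl i) * z (Sum.inr j))
    show z (Sum.inr j) * (z (Sum.inl i) * _) = _
    ring
  have hΨ : ∀ F : T, Ψ F = 0 := by
    intro F
    rw [← φ.sum_repr F, map_sum]
    have : ∀ l, Ψ ((φ.repr F) l • φ l) = 0 := by
      intro l
      rw [map_smul, hΨφ, hz0, smul_zero]
    simp [this]
  obtain ⟨f, hfT, hfu⟩ := htrans u hu (cb j0)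
  have hfinal := hΨ ⟨f, hfT⟩
  have hval : Ψ ⟨f, hfT⟩ = z (Sum.inr j0) := by
    show (∑ j, z (Sum.inr j) * (cb.repr (f u) j)) = _
    rw [hfu, cb.repr_self]
    simp [Finsupp.single_apply]
  rw [hval] at hfinal
  exact hj0 hfinal

end
end TransAux

/-- The subspace of linear maps sending the subspace `B` into the subspace `A`. -/
def mapsInto {k U V : Type*} [Field k] [AddCommGroup U] [Module k U]
    [AddCommGroup V] [Module k V] (B : Submodule k U) (A : Submodule k V) :
    Submodule k (U →ₗ[k] V) where
  carrier := {f | ∀ x ∈ B, f x ∈ A}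
  add_mem' := fun hf hg x hx => by
    simpa using A.add_mem (hf x hx) (hg x hx)
  zero_mem' := fun x _ => by simpa using A.zero_mem
  smul_mem' := fun c f hf x hx => by simpa using A.smul_mem c (hf x hx)

/-- **Technical lemma on transitive spaces of linear maps.**
Let `U, V` be vector spaces of dimensions `r, s` over an algebraically closed field `k`,
`B ⊆ U` a nonzero subspace of codimension `b < r`, `A ⊆ V` a subspace of dimension
`a < s`, and `W ⊆ Hom(U, V)` a `t`-dimensional subspace such that for every nonzero
`u ∈ U` and every `v ∈ V` there is `f ∈ W` with `f u = v`.  Then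
`dim {f ∈ W | f(B) ⊆ A} ≤ t - r - s + a + b + 1`. -/
theorem dim_mapsInto_le {k U V : Type*} [Field k] [IsAlgClosed k]
    [AddCommGroup U] [Module k U] [AddCommGroup V] [Module k V]
    [FiniteDimensional k U] [FiniteDimensional k V]
    (r s a b t : ℕ)
    (hU : finrank k U = r) (hV : finrank k V = s)
    (B : Submodule k U) (hB : B ≠ ⊥) (hBdim : finrank k B = r - b) (hb : b < r)
    (A : Submodule k V) (hAdim : finrank k A = a) (ha : a < s)
    (W : Submodule k (U →ₗ[k] V)) (hW : finrank k W = t)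
    (htrans : ∀ u : U, u ≠ 0 → ∀ v : V, ∃ f ∈ W, f u = v) :
    (finrank k ↥(W ⊓ mapsInto B A) : ℤ) ≤ (t : ℤ) - r - s + a + b + 1 := by
  classical
  -- the restriction map `W → Hom(B, V/A)`
  let ρ : W →ₗ[k] (B →ₗ[k] V ⧸ A) :=
    { toFun := fun f => (A.mkQ.comp (((f : U →ₗ[k] V)).comp B.subtype))
      map_add' := fun f g => by
        ext x
        simp
      map_smul' := fun r f => by
        ext x
        simp }
  have hker : LinearMap.ker ρ = Submodule.comap W.subtype (mapsInto B A) := by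
    ext f
    constructor
    · intro h x hx
      have h' := LinearMap.ext_iff.1 (LinearMap.mem_ker.1 h) ⟨x, hx⟩
      simpa [ρ, Submodule.Quotient.mk_eq_zero] using h'
    · intro h
      rw [LinearMap.mem_ker]
      ext x
      have := h x x.2
      simpa [ρ, Submodule.Quotient.mk_eq_zero] using this
  have hkerrank : finrank k (LinearMap.ker ρ) = finrank k ↥(W ⊓ mapsInto B A) := by
    rw [hker]
    have h1 := Submodule.finrank_map_subtype_eq W (Submodule.comap W.subtype (mapsInto B A))
    rw [Submodule.map_comap_subtype] at h1
    exact h1.symm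
  have hrank : finrank k (LinearMap.range ρ) + finrank k (LinearMap.ker ρ) = t := by
    rw [← hW]
    exact LinearMap.finrank_range_add_finrank_ker ρ
  -- transitivity of the image
  have htransT : ∀ u : B, u ≠ 0 → ∀ w : V ⧸ A, ∃ g ∈ LinearMap.range ρ, g u = w := by
    intro u hu w
    obtain ⟨v, hv⟩ := A.mkQ_surjective w
    obtain ⟨f, hfW, hfv⟩ := htrans (u : U)
      (fun h => hu (by exact_mod_cast Subtype.ext h)) v
    refine ⟨ρ ⟨f, hfW⟩, LinearMap.mem_range_self _ _, ?_⟩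
    show A.mkQ ((f : U →ₗ[k] V) ((B.subtype) u)) = w
    rw [Submodule.subtype_apply, hfv, ← hv]
  -- positivity
  have hBpos : 0 < finrank k B := by
    haveI : Nontrivial B := Submodule.nontrivial_iff_ne_bot.2 hB
    exact Module.finrank_pos
  have hquot : finrank k (V ⧸ A) + finrank k A = finrank k V :=
    Submodule.finrank_quotient_add_finrank A
  have hQpos : 0 < finrank k (V ⧸ A) := by omega
  have hkey := TransAux.key_transitive hBpos hQpos (LinearMap.range ρ) htransT
  -- assemble
  have h3 : finrank k B + b = r := by omega
  have h4 : finrank k (V ⧸ A) + a = s := by omega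
  have final_nat : finrank k ↥(W ⊓ mapsInto B A) + r + s ≤ t + a + b + 1 := by omega
  have final_int : (finrank k ↥(W ⊓ mapsInto B A) : ℤ) + r + s ≤ t + a + b + 1 := by
    exact_mod_cast final_nat
  linarith
end

section
/- Let $W \subseteq \mathrm{Hom}(U,V)$ be a linear subspace of linear maps between finite-dimensional vector spaces over an algebraically closed field, with $\dim U = r \geq 2$ and $\dim V = s \geq 2$, such that for every nonzero $u \in U$ the evaluation map $f \mapsto f(u)$ from $W$ to $V$ is surjective. Then $\dim W \geq r + s - 1$, i.e., $t \geq r + s - 1$. -/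
open Module

namespace SteinerRankAux

open MvPolynomial

noncomputable section

variable {k : Type*} [Field k]

/-- variable index type: `x`-variables and `y`-variables -/
abbrev σty (r s : ℕ) := Sum (Fin r) (Fin s)

/-- bigrading weight -/
def wt (r s : ℕ) : σty r s → ℕ × ℕ := Sum.elim (fun _ => (1, 0)) (fun _ => (0, 1))

lemma weight_wt {r s : ℕ} (d : σty r s →₀ ℕ) :
    (Finsupp.weight (wt r s)) d
      = (∑ p : Fin r, d (Sum.inl p), ∑ q : Fin s, d (Sum.inr q)) := by
  classical
  rw [Finsupp.weight_apply, Finsupp.sum_fintype _ _ (fun i => by simp)]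
  rw [Fintype.sum_sum_type]
  apply Prod.ext
  · simp [wt, Prod.fst_sum]
  · simp [wt, Prod.snd_sum]

/-- the bilinear polynomial attached to a matrix -/
def gp {r s : ℕ} (A : Matrix (Fin r) (Fin s) k) : MvPolynomial (σty r s) k :=
  ∑ p : Fin r, ∑ q : Fin s, C (A p q) * X (Sum.inl p) * X (Sum.inr q)

lemma isWH_single_mul {r s : ℕ} (a : k) (p : Fin r) (q : Fin s) :
    IsWeightedHomogeneous (wt r s)
      (C a * X (Sum.inl p) * X (Sum.inr q) : MvPolynomial (σty r s) k) (1, 1) := by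
  have h := ((isWeightedHomogeneous_C (wt r s) a).mul
      (isWeightedHomogeneous_X k (wt r s) (Sum.inl p))).mul
      (isWeightedHomogeneous_X k (wt r s) (Sum.inr q))
  simpa [wt] using h

lemma isWH_gp {r s : ℕ} (A : Matrix (Fin r) (Fin s) k) :
    IsWeightedHomogeneous (wt r s) (gp A) (1, 1) := by
  apply IsWeightedHomogeneous.sum
  intro p _
  apply IsWeightedHomogeneous.sum
  intro q _
  exact isWH_single_mul _ p q

lemma eval_gp {r s : ℕ} (A : Matrix (Fin r) (Fin s) k) (v : σty r s → k) :
    eval v (gp A) = ∑ p : Fin r, ∑ q : Fin s, A p q * v (Sum.inl p) * v (Sum.inr q) := by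
  simp [gp]

lemma isWH_XY {r s : ℕ} (p : Fin r) (q : Fin s) :
    IsWeightedHomogeneous (wt r s)
      (X (Sum.inl p) * X (Sum.inr q) : MvPolynomial (σty r s) k) (1, 1) := by
  have h := (isWeightedHomogeneous_X k (wt r s) (Sum.inl p)).mul
      (isWeightedHomogeneous_X k (wt r s) (Sum.inr q))
  simpa [wt] using h

lemma isWH_pow {σ' : Type*} {w : σ' → ℕ × ℕ} {φ : MvPolynomial σ' k}
    (h : IsWeightedHomogeneous w φ (1, 1)) (n : ℕ) :
    IsWeightedHomogeneous w (φ ^ n) (n, n) := by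
  induction n with
  | zero => rw [pow_zero]; exact isWeightedHomogeneous_one k w
  | succ m ih =>
      have := ih.mul h
      have he : ((m : ℕ), (m : ℕ)) + (1, 1) = ((m + 1 : ℕ), (m + 1 : ℕ)) := rfl
      rw [← pow_succ] at this
      rwa [he] at this

/-- component of a product with a weighted-homogeneous factor -/
lemma whc_mul {σ' : Type*} (w : σ' → ℕ × ℕ) (c g : MvPolynomial σ' k) (m n : ℕ × ℕ)
    (hg : IsWeightedHomogeneous w g n) :
    weightedHomogeneousComponent w (m + n) (c * g)
      = weightedHomogeneousComponent w m c * g := by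
  classical
  have hfin := weightedHomogeneousComponent_finsupp (w := w) c
  have hc : c = ∑ m' ∈ hfin.toFinset, weightedHomogeneousComponent w m' c := by
    rw [← finsum_eq_sum _ hfin, sum_weightedHomogeneousComponent]
  have hterm : ∀ m' : ℕ × ℕ,
      weightedHomogeneousComponent w (m + n)
        (weightedHomogeneousComponent w m' c * g)
      = if m' = m then weightedHomogeneousComponent w m' c * g else 0 := by
    intro m'
    have hh : IsWeightedHomogeneous w (weightedHomogeneousComponent w m' c * g) (m' + n) :=
      (weightedHomogeneousComponent_isWeightedHomogeneous m' c).mul hg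
    by_cases hmm : m' = m
    · subst hmm
      simp [hh.weightedHomogeneousComponent_same]
    · rw [if_neg hmm]
      exact hh.weightedHomogeneousComponent_ne _
        (fun hcontra => hmm (add_right_cancel hcontra).symm)
  by_cases hm : m ∈ hfin.toFinset
  · conv_lhs => rw [hc]
    rw [Finset.sum_mul, map_sum, Finset.sum_congr rfl (fun m' _ => hterm m'),
      Finset.sum_ite_eq' hfin.toFinset m
        (fun m' => weightedHomogeneousComponent w m' c * g), if_pos hm]
  · have h0 : weightedHomogeneousComponent w m c = 0 := by
      by_contra h
      exact hm (hfin.mem_toFinset.mpr (Function.mem_support.mpr h))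
    rw [h0, zero_mul]
    conv_lhs => rw [hc]
    rw [Finset.sum_mul, map_sum]
    apply Finset.sum_eq_zero
    intro m' hm'
    rw [hterm m', if_neg (by rintro rfl; exact hm hm')]

/-- the product `monomial ∙ ∏ gᵢ^αᵢ` -/
def embP (r s t : ℕ) (A : Fin t → Matrix (Fin r) (Fin s) k)
    (dα : (σty r s → ℕ) × (Fin t → ℕ)) : MvPolynomial (σty r s) k :=
  monomial (Finsupp.equivFunOnFinite.symm dα.1) 1 * ∏ h, gp (A h) ^ dα.2 h

def IdxF (r s t L0 L : ℕ) : Finset ((σty r s → ℕ) × (Fin t → ℕ)) :=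
  ((Fintype.piFinset fun _ : σty r s => Finset.range L0) ×ˢ
    Fintype.piFinset fun _ : Fin t => Finset.range (L + 1)).filter
    fun dα => (∑ p, dα.1 (Sum.inl p)) = (∑ q, dα.1 (Sum.inr q)) ∧
      (∑ h, dα.2 h) + (∑ p, dα.1 (Sum.inl p)) = L

open scoped Classical in
lemma step_span (r s t N : ℕ) (hN : 1 ≤ N) (hr : 2 ≤ r) (hs : 2 ≤ s)
    (A : Fin t → Matrix (Fin r) (Fin s) k)
    (hcoef : ∀ (p : Fin r) (q : Fin s), ∃ c : Fin t → MvPolynomial (σty r s) k,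
      (∀ h, IsWeightedHomogeneous (wt r s) (c h) (N - 1, N - 1)) ∧
      (X (Sum.inl p) * X (Sum.inr q)) ^ N = ∑ h, c h * gp (A h)) :
    ∀ L (f : MvPolynomial (σty r s) k), IsWeightedHomogeneous (wt r s) f (L, L) →
      f ∈ Submodule.span k
        (((IdxF r s t (max r s * (N - 1) + 1) L).image (embP r s t A) : Finset _) :
          Set (MvPolynomial (σty r s) k)) := by
  classical
  set L0 := max r s * (N - 1) + 1 with hL0def
  set S : ℕ → Submodule k (MvPolynomial (σty r s) k) := fun L =>
    Submodule.span k
      (((IdxF r s t L0 L).image (embP r s t A) : Finset _) : Set (MvPolynomial (σty r s) k))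
    with hSdef
  show ∀ L f, IsWeightedHomogeneous (wt r s) f (L, L) → f ∈ S L
  -- multiplication by a `gp (A h)` maps `S L'` into `S (L' + 1)`
  have hstep : ∀ (L' : ℕ) (h : Fin t) (e : MvPolynomial (σty r s) k),
      e ∈ S L' → gp (A h) * e ∈ S (L' + 1) := by
    intro L' h e he
    induction he using Submodule.span_induction with
    | mem x hx =>
        obtain ⟨dα, hdα, rfl⟩ := Finset.mem_image.mp (Finset.mem_coe.mp hx)
        rw [IdxF, Finset.mem_filter, Finset.mem_product] at hdα
        obtain ⟨⟨hd1, hd2⟩, hbal, hdeg⟩ := hdα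
        apply Submodule.subset_span
        rw [Finset.mem_coe, Finset.mem_image]
        refine ⟨(dα.1, fun h' => dα.2 h' + if h' = h then 1 else 0), ?_, ?_⟩
        · rw [IdxF, Finset.mem_filter, Finset.mem_product]
          have hsum : (∑ h', (dα.2 h' + if h' = h then 1 else 0)) = (∑ h', dα.2 h') + 1 := by
            rw [Finset.sum_add_distrib, Finset.sum_ite_eq' Finset.univ h (fun _ => 1)]
            simp
          dsimp only
          refine ⟨⟨hd1, ?_⟩, hbal, by rw [hsum]; omega⟩
          rw [Fintype.mem_piFinset]
          intro h'
          rw [Finset.mem_range]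
          have hle : dα.2 h' + (if h' = h then 1 else 0) ≤ ∑ h'', (dα.2 h'' + if h'' = h then 1 else 0) :=
            Finset.single_le_sum (f := fun h'' => dα.2 h'' + if h'' = h then 1 else 0)
              (fun _ _ => Nat.zero_le _) (Finset.mem_univ h')
          have hle2 : dα.2 h' + (if h' = h then 1 else 0) ≤ (∑ h'', dα.2 h'') + 1 := by
            rw [← hsum]; exact hle
          split at hle2 <;> omega
        · rw [embP, embP]
          dsimp only
          have hprod : (∏ h', gp (A h') ^ (dα.2 h' + if h' = h then 1 else 0))
              = (∏ h', gp (A h') ^ dα.2 h') * gp (A h) := by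
            calc (∏ h', gp (A h') ^ (dα.2 h' + if h' = h then 1 else 0))
                = ∏ h', gp (A h') ^ dα.2 h' * gp (A h') ^ (if h' = h then 1 else 0) :=
                  Finset.prod_congr rfl fun h' _ => pow_add _ _ _
              _ = (∏ h', gp (A h') ^ dα.2 h')
                    * ∏ h', gp (A h') ^ (if h' = h then 1 else 0) :=
                  Finset.prod_mul_distrib
              _ = (∏ h', gp (A h') ^ dα.2 h') * gp (A h) := by
                  congr 1
                  rw [Finset.prod_congr rfl (fun h' _ => by
                    split <;> simp : ∀ h' ∈ Finset.univ, gp (A h') ^ (if h' = h then 1 else 0)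
                      = if h' = h then gp (A h') else 1)]
                  rw [Finset.prod_ite_eq' Finset.univ h (fun h' => gp (A h'))]
                  simp
          rw [hprod]
          ring
    | zero => rw [mul_zero]; exact Submodule.zero_mem _
    | add x y hx hy ihx ihy => rw [mul_add]; exact Submodule.add_mem _ ihx ihy
    | smul a x hx ih => rw [mul_smul_comm]; exact Submodule.smul_mem _ _ ih
  intro L
  induction L using Nat.strong_induction_on with
  | _ L IH =>
  have hmono : ∀ d : σty r s →₀ ℕ, Finsupp.weight (wt r s) d = (L, L) →
      (monomial d (1 : k)) ∈ S L := by
    intro d hd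
    obtain ⟨hDx, hDy⟩ : (∑ p, d (Sum.inl p)) = L ∧ (∑ q, d (Sum.inr q)) = L := by
      rw [weight_wt] at hd
      exact ⟨congrArg Prod.fst hd, congrArg Prod.snd hd⟩
    rcases lt_or_ge L L0 with hL | hL
    · -- base case
      apply Submodule.subset_span
      rw [Finset.mem_coe, Finset.mem_image]
      refine ⟨(fun i => d i, fun _ => 0), ?_, ?_⟩
      · rw [IdxF, Finset.mem_filter, Finset.mem_product]
        refine ⟨⟨?_, ?_⟩, by dsimp only; simp [hDx, hDy]⟩
        · rw [Fintype.mem_piFinset]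
          intro i
          rw [Finset.mem_range]
          dsimp only
          rcases i with p | q
          · have : d (Sum.inl p) ≤ ∑ p', d (Sum.inl p') :=
              Finset.single_le_sum (f := fun p' => d (Sum.inl p'))
                (fun _ _ => Nat.zero_le _) (Finset.mem_univ p)
            omega
          · have : d (Sum.inr q) ≤ ∑ q', d (Sum.inr q') :=
              Finset.single_le_sum (f := fun q' => d (Sum.inr q'))
                (fun _ _ => Nat.zero_le _) (Finset.mem_univ q)
            omega
        · rw [Fintype.mem_piFinset]
          intro h
          simp
      · rw [embP]
        simp [Finsupp.equivFunOnFinite_symm_coe]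
    · -- inductive case
      have hmax : 2 ≤ max r s := le_trans hr (le_max_left r s)
      have hNL : N ≤ L := by
        have h2 : 2 * (N - 1) ≤ max r s * (N - 1) := Nat.mul_le_mul_right _ hmax
        omega
      have hp0 : ∃ p0 : Fin r, N ≤ d (Sum.inl p0) := by
        by_contra hnp
        push_neg at hnp
        have hsb : (∑ p, d (Sum.inl p)) ≤ r * (N - 1) := by
          calc (∑ p, d (Sum.inl p)) ≤ ∑ _p : Fin r, (N - 1) :=
                Finset.sum_le_sum (fun p _ => by have := hnp p; omega)
            _ = r * (N - 1) := by simp [Finset.sum_const, mul_comm]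
        have hrm : r * (N - 1) ≤ max r s * (N - 1) :=
          Nat.mul_le_mul_right _ (le_max_left r s)
        omega
      have hq0 : ∃ q0 : Fin s, N ≤ d (Sum.inr q0) := by
        by_contra hnq
        push_neg at hnq
        have hsb : (∑ q, d (Sum.inr q)) ≤ s * (N - 1) := by
          calc (∑ q, d (Sum.inr q)) ≤ ∑ _q : Fin s, (N - 1) :=
                Finset.sum_le_sum (fun q _ => by have := hnq q; omega)
            _ = s * (N - 1) := by simp [Finset.sum_const, mul_comm]
        have hrm : s * (N - 1) ≤ max r s * (N - 1) :=
          Nat.mul_le_mul_right _ (le_max_right r s)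
        omega
      obtain ⟨p0, hp0⟩ := hp0
      obtain ⟨q0, hq0⟩ := hq0
      set eN : σty r s →₀ ℕ :=
        Finsupp.single (Sum.inl p0) N + Finsupp.single (Sum.inr q0) N with heNdef
      have hle : eN ≤ d := by
        rw [Finsupp.le_def]
        intro i
        rcases i with p | q
        · rcases eq_or_ne p0 p with rfl | hne
          · simpa [heNdef, Finsupp.single_apply] using hp0
          · simp [heNdef, Finsupp.single_apply, hne]
        · rcases eq_or_ne q0 q with rfl | hne
          · simpa [heNdef, Finsupp.single_apply] using hq0
          · simp [heNdef, Finsupp.single_apply, hne]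
      have hsplit : d = eN + (d - eN) := (add_tsub_cancel_of_le hle).symm
      have heN : Finsupp.weight (wt r s) eN = ((N : ℕ), (N : ℕ)) := by
        rw [weight_wt]
        have h1 : (∑ p, eN (Sum.inl p)) = N := by
          simp [heNdef, Finsupp.single_apply, Finset.sum_add_distrib,
            Finset.sum_ite_eq, Finset.sum_ite_eq']
        have h2 : (∑ q, eN (Sum.inr q)) = N := by
          simp [heNdef, Finsupp.single_apply, Finset.sum_add_distrib,
            Finset.sum_ite_eq, Finset.sum_ite_eq']
        rw [h1, h2]
      have hd' : Finsupp.weight (wt r s) (d - eN) = ((L - N : ℕ), (L - N : ℕ)) := by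
        have h2 : ((L : ℕ), (L : ℕ)) = ((N : ℕ), (N : ℕ)) + Finsupp.weight (wt r s) (d - eN) := by
          rw [← heN, ← map_add, ← hsplit, hd]
        rcases hW : Finsupp.weight (wt r s) (d - eN) with ⟨a, b⟩
        rw [hW, Prod.mk_add_mk, Prod.mk.injEq] at h2
        rw [Prod.mk.injEq]
        omega
      obtain ⟨c, hchom, hceq⟩ := hcoef p0 q0
      have hz : ((X (Sum.inl p0) * X (Sum.inr q0) : MvPolynomial (σty r s) k)) ^ N
          = monomial eN 1 := by
        rw [mul_pow, X_pow_eq_monomial, X_pow_eq_monomial, monomial_mul, one_mul]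
      have hmon_eq : (monomial d (1 : k))
          = ∑ h, gp (A h) * (c h * monomial (d - eN) 1) := by
        calc (monomial d (1 : k)) = monomial eN 1 * monomial (d - eN) 1 := by
              rw [monomial_mul, one_mul]
              exact congrArg (fun e => monomial e (1 : k)) hsplit
          _ = ((X (Sum.inl p0) * X (Sum.inr q0)) ^ N) * monomial (d - eN) 1 := by rw [hz]
          _ = (∑ h, c h * gp (A h)) * monomial (d - eN) 1 := by rw [hceq]
          _ = ∑ h, gp (A h) * (c h * monomial (d - eN) 1) := by
              rw [Finset.sum_mul]
              exact Finset.sum_congr rfl fun h _ => by ring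
      rw [hmon_eq]
      apply Submodule.sum_mem
      intro h _
      have hhom : IsWeightedHomogeneous (wt r s) (c h * monomial (d - eN) (1 : k))
          ((L - 1 : ℕ), (L - 1 : ℕ)) := by
        have := (hchom h).mul
          (isWeightedHomogeneous_monomial (wt r s) (d - eN) (1 : k) hd')
        have he : ((N - 1 : ℕ), (N - 1 : ℕ)) + ((L - N : ℕ), (L - N : ℕ))
            = ((L - 1 : ℕ), (L - 1 : ℕ)) := by
          rw [Prod.mk_add_mk, Prod.mk.injEq]
          omega
        rwa [he] at this
      have hmem := IH (L - 1) (by omega) _ hhom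
      have := hstep (L - 1) h _ hmem
      have hLL : L - 1 + 1 = L := by omega
      rwa [hLL] at this
  intro f hf
  rw [as_sum f]
  apply Submodule.sum_mem
  intro d hd
  have h1 : (monomial d (coeff d f)) = coeff d f • monomial d (1 : k) := by
    rw [smul_monomial, smul_eq_mul, mul_one]
  rw [h1]
  exact Submodule.smul_mem _ _ (hmono d (hf (mem_support_iff.mp hd)))

def BFin (r s L : ℕ) : Finset (σty r s → ℕ) :=
  (Fintype.piFinset fun _ : σty r s => Finset.range (L + 1)).filter
    fun d => (∑ p, d (Sum.inl p)) = L ∧ (∑ q, d (Sum.inr q)) = L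

/-- a family of size `n` which is linearly independent and contained in the span of a
finset `E` forces `n ≤ E.card` -/
lemma card_le_of_li_span {M : Type*} [AddCommGroup M] [Module k M] {ι : Type*} [Fintype ι]
    (fam : ι → M) (hli : LinearIndependent k fam) (E : Finset M)
    (hmem : ∀ i, fam i ∈ Submodule.span k (E : Set M)) :
    Fintype.card ι ≤ E.card := by
  classical
  haveI : FiniteDimensional k (Submodule.span k (E : Set M)) :=
    FiniteDimensional.span_of_finite k (E.finite_toSet)
  have hli' : LinearIndependent k
      (fun i => (⟨fam i, hmem i⟩ : Submodule.span k (E : Set M))) :=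
    LinearIndependent.of_comp (Submodule.span k (E : Set M)).subtype hli
  have h1 := hli'.fintype_card_le_finrank
  have h2 : finrank k (Submodule.span k (E : Set M)) ≤ E.card := by
    have := finrank_span_le_card (R := k) (E : Set M)
    simpa using this
  omega

lemma prod_ite_card {ι : Type*} [Fintype ι] [DecidableEq ι] (i0 : ι) (m : ℕ) :
    ∏ i : ι, (if i = i0 then 1 else m) = m ^ (Fintype.card ι - 1) := by
  classical
  rw [← Finset.mul_prod_erase Finset.univ _ (Finset.mem_univ i0), if_pos rfl, one_mul]
  rw [Finset.prod_congr rfl (fun i hi => by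
    rw [if_neg (Finset.ne_of_mem_erase hi)])]
  rw [Finset.prod_const, Finset.card_erase_of_mem (Finset.mem_univ i0)]
  simp

lemma BFin_card_lower (r s : ℕ) (hr : 2 ≤ r) (hs : 2 ≤ s) (W : ℕ) :
    (W + 1) ^ ((r - 1) + (s - 1)) ≤ (BFin r s ((r - 1) * (s - 1) * W)).card := by
  classical
  set u := r - 1 with hu
  set v := s - 1 with hv
  set L := u * v * W with hL
  have hu1 : 1 ≤ u := by omega
  have hv1 : 1 ≤ v := by omega
  have hp0 : 0 < r := by omega
  have hq0 : 0 < s := by omega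
  set p0 : Fin r := ⟨0, hp0⟩ with hp0def
  set q0 : Fin s := ⟨0, hq0⟩ with hq0def
  set src : Finset ((Fin r → ℕ) × (Fin s → ℕ)) :=
    (Fintype.piFinset fun p : Fin r => Finset.range (if p = p0 then 1 else v * W + 1)) ×ˢ
      (Fintype.piFinset fun q : Fin s => Finset.range (if q = q0 then 1 else u * W + 1))
    with hsrc
  have hcard : src.card = (v * W + 1) ^ u * (u * W + 1) ^ v := by
    rw [hsrc, Finset.card_product, Fintype.card_piFinset, Fintype.card_piFinset]
    simp only [Finset.card_range]
    rw [prod_ite_card p0 (v * W + 1), prod_ite_card q0 (u * W + 1)]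
    simp [hu, hv]
  -- the map into BFin
  set Φ : (Fin r → ℕ) × (Fin s → ℕ) → (σty r s → ℕ) := fun ab =>
    Sum.elim (fun p => if p = p0 then L - (∑ j, ab.1 j) else ab.1 p)
      (fun q => if q = q0 then L - (∑ j, ab.2 j) else ab.2 q) with hΦ
  have haux : ∀ ab ∈ src, (ab.1 p0 = 0 ∧ (∀ p, ab.1 p ≤ v * W) ∧ (∑ j, ab.1 j) ≤ L)
      ∧ (ab.2 q0 = 0 ∧ (∀ q, ab.2 q ≤ u * W) ∧ (∑ j, ab.2 j) ≤ L) := by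
    intro ab hab
    rw [hsrc, Finset.mem_product, Fintype.mem_piFinset, Fintype.mem_piFinset] at hab
    have h1 : ab.1 p0 = 0 := by
      have := hab.1 p0
      rw [if_pos rfl, Finset.mem_range] at this
      omega
    have h2 : ∀ p, ab.1 p ≤ v * W := by
      intro p
      rcases eq_or_ne p p0 with rfl | hne
      · omega
      · have := hab.1 p
        rw [if_neg hne, Finset.mem_range] at this
        omega
    have h3 : (∑ j, ab.1 j) ≤ L := by
      have : (∑ j, ab.1 j) = ∑ j ∈ Finset.univ.erase p0, ab.1 j := by
        rw [← Finset.add_sum_erase Finset.univ _ (Finset.mem_univ p0), h1, zero_add]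
      rw [this]
      calc ∑ j ∈ Finset.univ.erase p0, ab.1 j
          ≤ ∑ _j ∈ Finset.univ.erase p0, v * W :=
            Finset.sum_le_sum fun j _ => h2 j
        _ = (r - 1) * (v * W) := by
            rw [Finset.sum_const, Finset.card_erase_of_mem (Finset.mem_univ p0)]
            simp [mul_comm]
        _ = L := by rw [hL, hu]; ring
    have h4 : ab.2 q0 = 0 := by
      have := hab.2 q0
      rw [if_pos rfl, Finset.mem_range] at this
      omega
    have h5 : ∀ q, ab.2 q ≤ u * W := by
      intro q
      rcases eq_or_ne q q0 with rfl | hne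
      · omega
      · have := hab.2 q
        rw [if_neg hne, Finset.mem_range] at this
        omega
    have h6 : (∑ j, ab.2 j) ≤ L := by
      have he : (∑ j, ab.2 j) = ∑ j ∈ Finset.univ.erase q0, ab.2 j := by
        rw [← Finset.add_sum_erase Finset.univ _ (Finset.mem_univ q0), h4, zero_add]
      rw [he]
      calc ∑ j ∈ Finset.univ.erase q0, ab.2 j
          ≤ ∑ _j ∈ Finset.univ.erase q0, u * W :=
            Finset.sum_le_sum fun j _ => h5 j
        _ = (s - 1) * (u * W) := by
            rw [Finset.sum_const, Finset.card_erase_of_mem (Finset.mem_univ q0)]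
            simp [mul_comm]
        _ = L := by rw [hL, hv]; ring
    exact ⟨⟨h1, h2, h3⟩, ⟨h4, h5, h6⟩⟩
  have hsums : ∀ ab ∈ src, (∑ p, Φ ab (Sum.inl p)) = L ∧ (∑ q, Φ ab (Sum.inr q)) = L := by
    intro ab hab
    obtain ⟨⟨h1, h2, h3⟩, h4, h5, h6⟩ := haux ab hab
    constructor
    · have : (∑ p, Φ ab (Sum.inl p))
          = Φ ab (Sum.inl p0) + ∑ p ∈ Finset.univ.erase p0, Φ ab (Sum.inl p) :=
        (Finset.add_sum_erase Finset.univ (fun p => Φ ab (Sum.inl p))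
          (Finset.mem_univ p0)).symm
      rw [this]
      have e1 : Φ ab (Sum.inl p0) = L - (∑ j, ab.1 j) := by simp [hΦ]
      have e2 : ∑ p ∈ Finset.univ.erase p0, Φ ab (Sum.inl p)
          = ∑ p ∈ Finset.univ.erase p0, ab.1 p := by
        refine Finset.sum_congr rfl fun p hp => ?_
        simp [hΦ, Finset.ne_of_mem_erase hp]
      have e3 : ∑ p ∈ Finset.univ.erase p0, ab.1 p = ∑ j, ab.1 j := by
        rw [← Finset.add_sum_erase Finset.univ _ (Finset.mem_univ p0), h1, zero_add]
      rw [e1, e2, e3]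
      omega
    · have : (∑ q, Φ ab (Sum.inr q))
          = Φ ab (Sum.inr q0) + ∑ q ∈ Finset.univ.erase q0, Φ ab (Sum.inr q) :=
        (Finset.add_sum_erase Finset.univ (fun q => Φ ab (Sum.inr q))
          (Finset.mem_univ q0)).symm
      rw [this]
      have e1 : Φ ab (Sum.inr q0) = L - (∑ j, ab.2 j) := by simp [hΦ]
      have e2 : ∑ q ∈ Finset.univ.erase q0, Φ ab (Sum.inr q)
          = ∑ q ∈ Finset.univ.erase q0, ab.2 q := by
        refine Finset.sum_congr rfl fun q hq => ?_
        simp [hΦ, Finset.ne_of_mem_erase hq]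
      have e3 : ∑ q ∈ Finset.univ.erase q0, ab.2 q = ∑ j, ab.2 j := by
        rw [← Finset.add_sum_erase Finset.univ _ (Finset.mem_univ q0), h4, zero_add]
      rw [e1, e2, e3]
      omega
  have hmaps : ∀ ab ∈ src, Φ ab ∈ BFin r s L := by
    intro ab hab
    obtain ⟨⟨h1, h2, h3⟩, h4, h5, h6⟩ := haux ab hab
    rw [BFin, Finset.mem_filter]
    refine ⟨?_, hsums ab hab⟩
    rw [Fintype.mem_piFinset]
    intro i
    rw [Finset.mem_range]
    rcases i with p | q
    · have h2p := h2 p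
      have hvWL : v * W ≤ L := by
        calc v * W ≤ u * (v * W) := Nat.le_mul_of_pos_left _ (by omega)
          _ = L := by rw [hL]; ring
      simp only [hΦ, Sum.elim_inl]
      split <;> omega
    · have h5q := h5 q
      have huWL : u * W ≤ L := by
        calc u * W ≤ v * (u * W) := Nat.le_mul_of_pos_left _ (by omega)
          _ = L := by rw [hL]; ring
      simp only [hΦ, Sum.elim_inr]
      split <;> omega
  have hinj : Set.InjOn Φ src := by
    intro ab hab ab' hab' heq
    obtain ⟨⟨h1, _, _⟩, h4, _, _⟩ := haux ab hab
    obtain ⟨⟨h1', _, _⟩, h4', _, _⟩ := haux ab' hab'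
    have hfst : ab.1 = ab'.1 := by
      funext p
      rcases eq_or_ne p p0 with rfl | hne
      · rw [h1, h1']
      · have := congrFun heq (Sum.inl p)
        simpa [hΦ, hne] using this
    have hsnd : ab.2 = ab'.2 := by
      funext q
      rcases eq_or_ne q q0 with rfl | hne
      · rw [h4, h4']
      · have := congrFun heq (Sum.inr q)
        simpa [hΦ, hne] using this
    exact Prod.ext hfst hsnd
  have hcardle : src.card ≤ (BFin r s L).card :=
    Finset.card_le_card_of_injOn Φ hmaps hinj
  have hlow : (W + 1) ^ (u + v) ≤ src.card := by
    rw [hcard, pow_add]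
    have e1 : (W + 1) ^ u ≤ (v * W + 1) ^ u :=
      Nat.pow_le_pow_left (by nlinarith) u
    have e2 : (W + 1) ^ v ≤ (u * W + 1) ^ v :=
      Nat.pow_le_pow_left (by nlinarith) v
    exact Nat.mul_le_mul e1 e2
  omega

lemma IdxF_card_upper (r s t L0 L : ℕ) (ht : 1 ≤ t) :
    (IdxF r s t L0 L).card ≤ L0 ^ (r + s) * (L + 1) ^ (t - 1) := by
  classical
  set h0 : Fin t := ⟨0, by omega⟩ with hh0
  set tgt : Finset ((σty r s → ℕ) × (Fin t → ℕ)) :=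
    (Fintype.piFinset fun _ : σty r s => Finset.range L0) ×ˢ
      (Fintype.piFinset fun h : Fin t => Finset.range (if h = h0 then 1 else L + 1))
    with htgt
  set Ψ : ((σty r s → ℕ) × (Fin t → ℕ)) → ((σty r s → ℕ) × (Fin t → ℕ)) := fun dα =>
    (dα.1, fun h => if h = h0 then 0 else dα.2 h) with hΨ
  have hmaps : ∀ dα ∈ IdxF r s t L0 L, Ψ dα ∈ tgt := by
    intro dα hdα
    rw [IdxF, Finset.mem_filter, Finset.mem_product] at hdα
    obtain ⟨⟨hd1, hd2⟩, _, _⟩ := hdα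
    rw [htgt, Finset.mem_product]
    refine ⟨hd1, ?_⟩
    rw [Fintype.mem_piFinset]
    intro h
    rw [Fintype.mem_piFinset] at hd2
    have := hd2 h
    rw [Finset.mem_range] at this ⊢
    simp only [hΨ]
    by_cases hcase : h = h0 <;> simp [hcase] <;> omega
  have hinj : Set.InjOn Ψ (IdxF r s t L0 L) := by
    intro dα hdα dα' hdα' heq
    rw [Finset.mem_coe, IdxF, Finset.mem_filter] at hdα hdα'
    obtain ⟨_, hb, hs1⟩ := hdα
    obtain ⟨_, hb', hs1'⟩ := hdα'
    have h1 : dα.1 = dα'.1 := by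
      have := congrArg Prod.fst heq
      simpa [hΨ] using this
    have h2 : ∀ h : Fin t, h ≠ h0 → dα.2 h = dα'.2 h := by
      intro h hne
      have := congrFun (congrArg Prod.snd heq) h
      simpa [hΨ, hne] using this
    have hsum : ∀ α : Fin t → ℕ, (∑ h, α h) = α h0 + ∑ h ∈ Finset.univ.erase h0, α h :=
      fun α => (Finset.add_sum_erase Finset.univ α (Finset.mem_univ h0)).symm
    have he : ∑ h ∈ Finset.univ.erase h0, dα.2 h = ∑ h ∈ Finset.univ.erase h0, dα'.2 h :=
      Finset.sum_congr rfl fun h hh => h2 h (Finset.ne_of_mem_erase hh)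
    have h3 : dα.2 h0 = dα'.2 h0 := by
      rw [h1] at hs1
      have e1 := hsum dα.2
      have e2 := hsum dα'.2
      omega
    have h4 : dα.2 = dα'.2 := by
      funext h
      rcases eq_or_ne h h0 with rfl | hne
      · exact h3
      · exact h2 h hne
    exact Prod.ext h1 h4
  have hcard : tgt.card = L0 ^ (r + s) * (L + 1) ^ (t - 1) := by
    rw [htgt, Finset.card_product, Fintype.card_piFinset, Fintype.card_piFinset]
    simp only [Finset.card_range]
    rw [Finset.prod_const, prod_ite_card h0 (L + 1)]
    congr 2
    · simp
    · simp
  calc (IdxF r s t L0 L).card ≤ tgt.card := Finset.card_le_card_of_injOn Ψ hmaps hinj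
    _ = _ := hcard
variable [IsAlgClosed k]

lemma exists_pow_mem (r s t : ℕ)
    (A : Fin t → Matrix (Fin r) (Fin s) k)
    (hcon : ∀ (x : Fin r → k) (y : Fin s → k), x ≠ 0 → y ≠ 0 →
      ∃ i, ∑ p : Fin r, ∑ q : Fin s, A i p q * x p * y q ≠ 0) :
    ∃ N, 1 ≤ N ∧ ∀ (p : Fin r) (q : Fin s),
      (X (Sum.inl p) * X (Sum.inr q) : MvPolynomial (σty r s) k) ^ N
        ∈ Ideal.span (Set.range fun i => gp (A i)) := by
  classical
  have hrad : ∀ (p : Fin r) (q : Fin s),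
      (X (Sum.inl p) * X (Sum.inr q) : MvPolynomial (σty r s) k)
        ∈ (Ideal.span (Set.range fun i => gp (A i))).radical := by
    intro p q
    rw [← vanishingIdeal_zeroLocus_eq_radical (K := k), mem_vanishingIdeal_iff]
    intro v hv
    have hxy : (v ∘ Sum.inl) = 0 ∨ (v ∘ Sum.inr) = 0 := by
      by_contra hne
      push_neg at hne
      obtain ⟨i, hi⟩ := hcon (v ∘ Sum.inl) (v ∘ Sum.inr) hne.1 hne.2
      apply hi
      have h0 : eval v (gp (A i)) = 0 := (mem_zeroLocus_iff.mp hv) _ (Ideal.subset_span (Set.mem_range_self i))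
      rw [eval_gp] at h0
      simpa [Function.comp] using h0
    rcases hxy with h | h
    · have h' : v (Sum.inl p) = 0 := congrFun h p
      simp [h']
    · have h' : v (Sum.inr q) = 0 := congrFun h q
      simp [h']
  choose n hn using fun pq : Fin r × Fin s => Ideal.mem_radical_iff.mp (hrad pq.1 pq.2)
  refine ⟨1 + Finset.univ.sup n, by omega, ?_⟩
  intro p q
  have h1 : n (p, q) ≤ 1 + Finset.univ.sup n := by
    have := Finset.le_sup (f := n) (Finset.mem_univ (p, q))
    omega
  have h2 : (X (Sum.inl p) * X (Sum.inr q) : MvPolynomial (σty r s) k) ^ (1 + Finset.univ.sup n)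
      = (X (Sum.inl p) * X (Sum.inr q)) ^ (1 + Finset.univ.sup n - n (p, q))
        * (X (Sum.inl p) * X (Sum.inr q)) ^ n (p, q) := by
    rw [← pow_add]
    congr 1
    omega
  rw [h2]
  exact Ideal.mul_mem_left _ _ (hn (p, q))

lemma step_coef (r s t N : ℕ) (hN : 1 ≤ N)
    (A : Fin t → Matrix (Fin r) (Fin s) k)
    (hzN : ∀ (p : Fin r) (q : Fin s),
      (X (Sum.inl p) * X (Sum.inr q) : MvPolynomial (σty r s) k) ^ N
        ∈ Ideal.span (Set.range fun i => gp (A i)))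
    (p : Fin r) (q : Fin s) :
    ∃ c : Fin t → MvPolynomial (σty r s) k,
      (∀ h, IsWeightedHomogeneous (wt r s) (c h) (N - 1, N - 1)) ∧
      (X (Sum.inl p) * X (Sum.inr q)) ^ N = ∑ h, c h * gp (A h) := by
  obtain ⟨c0, hc0⟩ := (Ideal.mem_span_range_iff_exists_fun).mp (hzN p q)
  refine ⟨fun h => weightedHomogeneousComponent (wt r s) (N - 1, N - 1) (c0 h),
    fun h => weightedHomogeneousComponent_isWeightedHomogeneous _ _, ?_⟩
  have hzh : IsWeightedHomogeneous (wt r s)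
      ((X (Sum.inl p) * X (Sum.inr q) : MvPolynomial (σty r s) k) ^ N) (N, N) :=
    isWH_pow (isWH_XY p q) N
  have he : ((N - 1 : ℕ), (N - 1 : ℕ)) + (1, 1) = ((N : ℕ), N) := by
    rw [Prod.mk_add_mk, Prod.mk.injEq]
    omega
  calc (X (Sum.inl p) * X (Sum.inr q) : MvPolynomial (σty r s) k) ^ N
      = weightedHomogeneousComponent (wt r s) (N, N)
          ((X (Sum.inl p) * X (Sum.inr q)) ^ N) :=
        (hzh.weightedHomogeneousComponent_same).symm
    _ = weightedHomogeneousComponent (wt r s) (N, N) (∑ h, c0 h * gp (A h)) := by rw [hc0]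
    _ = ∑ h, weightedHomogeneousComponent (wt r s) (N, N) (c0 h * gp (A h)) :=
        map_sum _ _ _
    _ = ∑ h, weightedHomogeneousComponent (wt r s) (N - 1, N - 1) (c0 h) * gp (A h) := by
        refine Finset.sum_congr rfl fun h _ => ?_
        rw [← he, whc_mul _ _ _ _ _ (isWH_gp (A h))]

open scoped Classical in
theorem core [IsAlgClosed k] (r s t : ℕ) (hr : 2 ≤ r) (hs : 2 ≤ s) (ht : t ≤ r + s - 2)
    (A : Fin t → Matrix (Fin r) (Fin s) k) :
    ∃ (x : Fin r → k) (y : Fin s → k), x ≠ 0 ∧ y ≠ 0 ∧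
      ∀ i, ∑ p : Fin r, ∑ q : Fin s, A i p q * x p * y q = 0 := by
  by_contra hcon
  push_neg at hcon
  have hone : ∀ n, 0 < n → (fun _ : Fin n => (1 : k)) ≠ 0 := by
    intro n hn hcontra
    have := congrFun hcontra ⟨0, hn⟩
    exact one_ne_zero this
  rcases Nat.eq_zero_or_pos t with ht0 | htpos
  · obtain ⟨i, _⟩ := hcon (fun _ => 1) (fun _ => 1) (hone r (by omega)) (hone s (by omega))
    have := i.2
    omega
  obtain ⟨N, hN1, hzN⟩ := exists_pow_mem r s t A hcon
  have hcoef := step_coef r s t N hN1 A hzN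
  have hspan := step_span r s t N hN1 hr hs A hcoef
  -- numerology
  set L0 : ℕ := max r s * (N - 1) + 1 with hL0
  set W : ℕ := L0 ^ (r + s) * ((r - 1) * (s - 1)) ^ (t - 1) with hWdef
  set L : ℕ := (r - 1) * (s - 1) * W with hLdef
  -- each balanced monomial of bidegree (L, L) lies in the span
  have hBsub : ∀ d ∈ BFin r s L,
      (monomial (Finsupp.equivFunOnFinite.symm d) (1 : k)) ∈ Submodule.span k
        (((IdxF r s t L0 L).image (embP r s t A) : Finset _) :
          Set (MvPolynomial (σty r s) k)) := by
    intro d hd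
    apply hspan L
    apply isWeightedHomogeneous_monomial
    rw [weight_wt]
    rw [BFin, Finset.mem_filter] at hd
    have hco : ∀ i, (Finsupp.equivFunOnFinite.symm d) i = d i := fun _ => rfl
    rw [Prod.mk.injEq]
    constructor
    · rw [Finset.sum_congr rfl (fun p _ => hco (Sum.inl p))]
      exact hd.2.1
    · rw [Finset.sum_congr rfl (fun q _ => hco (Sum.inr q))]
      exact hd.2.2
  -- linear independence of these monomials
  have hli : LinearIndependent k
      (fun d : (BFin r s L) =>
        (monomial (Finsupp.equivFunOnFinite.symm (d : σty r s → ℕ)) (1 : k))) := by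
    have hb := (basisMonomials (σty r s) k).linearIndependent
    have hinj : Function.Injective
        (fun d : (BFin r s L) => Finsupp.equivFunOnFinite.symm (d : σty r s → ℕ)) := by
      intro a b hab
      exact Subtype.ext (Finsupp.equivFunOnFinite.symm.injective hab)
    have h2 := hb.comp _ hinj
    have heqfun : ((basisMonomials (σty r s) k : (σty r s →₀ ℕ) → MvPolynomial (σty r s) k)
          ∘ fun d : (BFin r s L) => Finsupp.equivFunOnFinite.symm (d : σty r s → ℕ))
        = fun d : (BFin r s L) =>
          (monomial (Finsupp.equivFunOnFinite.symm (d : σty r s → ℕ)) (1 : k)) := by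
      funext d
      simp [coe_basisMonomials]
    rwa [heqfun] at h2
  have hcount1 : (BFin r s L).card ≤ ((IdxF r s t L0 L).image (embP r s t A)).card := by
    have := card_le_of_li_span _ hli ((IdxF r s t L0 L).image (embP r s t A))
      (fun i => hBsub i i.2)
    simpa [Fintype.card_coe] using this
  have hcount2 : ((IdxF r s t L0 L).image (embP r s t A)).card ≤ (IdxF r s t L0 L).card :=
    Finset.card_image_le
  have hcount3 := IdxF_card_upper r s t L0 L htpos
  have hlow := BFin_card_lower r s hr hs W
  rw [← hLdef] at hlow
  -- final arithmetic
  have huv1 : 1 ≤ (r - 1) * (s - 1) := by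
    have : 1 * 1 ≤ (r - 1) * (s - 1) := Nat.mul_le_mul (by omega) (by omega)
    omega
  have hL1le : L + 1 ≤ (r - 1) * (s - 1) * (W + 1) := by
    have he : (r - 1) * (s - 1) * (W + 1) = (r - 1) * (s - 1) * W + (r - 1) * (s - 1) := by
      ring
    omega
  have h5 : (L + 1) ^ (t - 1) ≤ ((r - 1) * (s - 1)) ^ (t - 1) * (W + 1) ^ (t - 1) := by
    calc (L + 1) ^ (t - 1) ≤ ((r - 1) * (s - 1) * (W + 1)) ^ (t - 1) :=
          Nat.pow_le_pow_left hL1le _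
      _ = _ := by rw [mul_pow]
  have h6 : (W + 1) ^ ((r - 1) + (s - 1))
      ≤ L0 ^ (r + s) * (((r - 1) * (s - 1)) ^ (t - 1) * (W + 1) ^ (t - 1)) := by
    calc (W + 1) ^ ((r - 1) + (s - 1)) ≤ (BFin r s L).card := hlow
      _ ≤ (IdxF r s t L0 L).card := le_trans hcount1 hcount2
      _ ≤ L0 ^ (r + s) * (L + 1) ^ (t - 1) := hcount3
      _ ≤ _ := Nat.mul_le_mul_left _ h5
  have h7 : (W + 1) ^ (t - 1) * (W + 1) ≤ (W + 1) ^ ((r - 1) + (s - 1)) := by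
    rw [← pow_succ]
    apply Nat.pow_le_pow_right (by omega)
    omega
  have h8 : (W + 1) ^ (t - 1) * (W + 1) ≤ (W + 1) ^ (t - 1) * W := by
    calc (W + 1) ^ (t - 1) * (W + 1)
        ≤ L0 ^ (r + s) * (((r - 1) * (s - 1)) ^ (t - 1) * (W + 1) ^ (t - 1)) :=
          le_trans h7 h6
      _ = (W + 1) ^ (t - 1) * (L0 ^ (r + s) * ((r - 1) * (s - 1)) ^ (t - 1)) := by ring
      _ = (W + 1) ^ (t - 1) * W := by rw [hWdef]
  have h9 : W + 1 ≤ W :=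
    Nat.le_of_mul_le_mul_left h8 (pow_pos (by omega) _)
  omega

end
end SteinerRankAux

/-- If `W ⊆ Hom(U,V)` is a subspace of linear maps between finite-dimensional vector
spaces over an algebraically closed field, with `dim U = r ≥ 2` and `dim V = s ≥ 2`,
such that for every nonzero `u ∈ U` the evaluation map `f ↦ f u` from `W` to `V` is
surjective, then `dim W ≥ r + s - 1`.  (A Steiner bundle on `ℙ^(r-1)` has rank at
least `r - 1`.) -/
theorem finrank_transitive_ge {k U V : Type*} [Field k] [IsAlgClosed k]
    [AddCommGroup U] [Module k U] [AddCommGroup V] [Module k V]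
    [FiniteDimensional k U] [FiniteDimensional k V]
    (r s : ℕ) (hr : 2 ≤ r) (hs : 2 ≤ s)
    (hU : finrank k U = r) (hV : finrank k V = s)
    (W : Submodule k (U →ₗ[k] V))
    (htrans : ∀ u : U, u ≠ 0 → ∀ v : V, ∃ f ∈ W, f u = v) :
    r + s - 1 ≤ finrank k W := by
  by_contra hlt
  push_neg at hlt
  set t := finrank k W with htdef
  have ht : t ≤ r + s - 2 := by omega
  let bU : Basis (Fin r) k U := finBasisOfFinrankEq k U hU
  let bV : Basis (Fin s) k V := finBasisOfFinrankEq k V hV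
  let bW : Basis (Fin t) k W := finBasisOfFinrankEq k W htdef.symm
  let A : Fin t → Matrix (Fin r) (Fin s) k :=
    fun i p q => bV.coord q ((bW i : U →ₗ[k] V) (bU p))
  obtain ⟨x, y, hx, hy, hzero⟩ := SteinerRankAux.core r s t hr hs ht A
  set u : U := ∑ p, x p • bU p with hudef
  have hu : u ≠ 0 := by
    intro h0
    apply hx
    have he : bU.equivFun.symm x = u := by
      rw [Basis.equivFun_symm_apply]
    have h1 : bU.equivFun.symm x = bU.equivFun.symm 0 := by
      rw [he, h0, map_zero]
    exact bU.equivFun.symm.injective h1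
  set ξ : V →ₗ[k] k := ∑ q, y q • bV.coord q with hξdef
  have hξbV : ∀ q0, ξ (bV q0) = y q0 := by
    intro q0
    rw [hξdef]
    rw [LinearMap.sum_apply]
    have : ∀ q, (y q • bV.coord q) (bV q0) = if q = q0 then y q else 0 := by
      intro q
      rw [LinearMap.smul_apply, Basis.coord_apply, Basis.repr_self, smul_eq_mul,
        Finsupp.single_apply]
      rcases eq_or_ne q q0 with rfl | hne
      · simp
      · simp [hne, Ne.symm hne]
    rw [Finset.sum_congr rfl (fun q _ => this q)]
    rw [Finset.sum_ite_eq' Finset.univ q0 (fun q => y q)]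
    simp
  obtain ⟨q0, hq0⟩ : ∃ q0, y q0 ≠ 0 := by
    by_contra hq
    push_neg at hq
    exact hy (funext fun q => hq q)
  have hξW : ∀ f ∈ W, ξ (f u) = 0 := by
    intro f hf
    set c : Fin t → k := fun i => bW.repr ⟨f, hf⟩ i with hcdef
    have hfeq : f = ∑ i, c i • (bW i : U →ₗ[k] V) := by
      have hrepr : (∑ i, c i • bW i : W) = ⟨f, hf⟩ := bW.sum_repr ⟨f, hf⟩
      have := congrArg (Subtype.val) hrepr
      simpa using this.symm
    have hkey : ∀ i, ξ ((bW i : U →ₗ[k] V) u) = ∑ p, ∑ q, A i p q * x p * y q := by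
      intro i
      have h1 : (bW i : U →ₗ[k] V) u = ∑ p, x p • (bW i : U →ₗ[k] V) (bU p) := by
        rw [hudef, map_sum]
        exact Finset.sum_congr rfl fun p _ => by rw [map_smul]
      have h2 : ∀ p, ξ ((bW i : U →ₗ[k] V) (bU p)) = ∑ q, y q * A i p q := by
        intro p
        rw [hξdef, LinearMap.sum_apply]
        exact Finset.sum_congr rfl fun q _ => by
          rw [LinearMap.smul_apply, smul_eq_mul]
      rw [h1, map_sum]
      have h3 : ∀ p, ξ (x p • (bW i : U →ₗ[k] V) (bU p)) = ∑ q, x p * (y q * A i p q) := by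
        intro p
        rw [map_smul, h2 p, smul_eq_mul, Finset.mul_sum]
      rw [Finset.sum_congr rfl fun p _ => h3 p]
      exact Finset.sum_congr rfl fun p _ => Finset.sum_congr rfl fun q _ => by ring
    have hfu : ξ (f u) = ∑ i, c i * ξ ((bW i : U →ₗ[k] V) u) := by
      have e1 : f u = ∑ i, c i • ((bW i : U →ₗ[k] V) u) := by
        rw [hfeq, LinearMap.sum_apply]
        exact Finset.sum_congr rfl fun i _ => by rw [LinearMap.smul_apply]
      rw [e1, map_sum]
      exact Finset.sum_congr rfl fun i _ => by rw [map_smul, smul_eq_mul]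
    rw [hfu]
    apply Finset.sum_eq_zero
    intro i _
    rw [hkey i, hzero i, mul_zero]
  obtain ⟨f, hfW, hfu⟩ := htrans u hu (bV q0)
  have hcontr := hξW f hfW
  rw [hfu, hξbV q0] at hcontr
  exact hq0 hcontr
end

section
/- Let $S$ be a 2-dimensional vector space and $V$ an $(n+1)$-dimensional vector space over an algebraically closed field, and let $T_0^* \subseteq S^* \otimes V^*$ be a $t$-dimensional subspace such that for every nonzero $u \in V$ and every $v \in S^*$ there is $f \in T_0^*$ (viewed as a map $V \to S^*$) with $f(u) = v$. Then the intersection of $\mathbb{P}(T_0)$ with the Segre variety $\mathbb{P}(S) \times \mathbb{P}(V)$ inside $\mathbb{P}(S \otimes V)$ is a smooth variety of dimension exactly $t - n - 1$, i.e., a smooth complete intersection of the Segre variety with the linear space, hence a smooth rational normal scroll of dimension $t - n - 1$ and degree $n + 1$. -/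
set_option maxHeartbeats 1000000
set_option synthInstance.maxHeartbeats 400000

open Module

variable {k S : Type*} [Field k] [AddCommGroup S] [Module k S]

/-- The (affine cone over the) embedded tangent space to the Segre variety of rank-one
maps at the rank-one point `h ⊗ v`. -/
def segreTangent {n : ℕ} (h : (Fin (n + 1) → k) →ₗ[k] k) (v : S →ₗ[k] k) :
    Submodule k ((Fin (n + 1) → k) →ₗ[k] (S →ₗ[k] k)) where
  carrier := {f | ∀ x, h x = 0 → f x ∈ Submodule.span k {v}}
  add_mem' := fun hf hg x hx => by
    simpa using Submodule.add_mem _ (hf x hx) (hg x hx)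
  zero_mem' := fun x _ => by simp
  smul_mem' := fun c f hf x hx => by simpa using Submodule.smul_mem _ c (hf x hx)

section Aux

open Polynomial

/-- Over an algebraically closed field, any pencil of square matrices contains a singular
member. -/
lemma segre_exists_pair_det_eq_zero [IsAlgClosed k] {m : ℕ}
    (A B : Matrix (Fin (m+1)) (Fin (m+1)) k) :
    ∃ a b : k, ¬(a = 0 ∧ b = 0) ∧ (a • A + b • B).det = 0 := by
  classical
  set p : k[X] := ((X : k[X]) • A.map C + B.map C).det with hp
  have hEval : ∀ r : k, p.eval r = (r • A + B).det := by
    intro r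
    have h1 : (((X : k[X]) • A.map C + B.map C).map (evalRingHom r)) = r • A + B := by
      ext i j
      simp only [coe_evalRingHom, Matrix.map_apply, Matrix.add_apply, Matrix.smul_apply,
        smul_eq_mul, eval_add, eval_mul, eval_X, eval_C, Pi.smul_apply]
    rw [hp, ← coe_evalRingHom, RingHom.map_det, RingHom.mapMatrix_apply, h1]
  by_cases hp0 : p = 0
  · exact ⟨0, 1, by simp, by simpa [hp0] using (hEval 0).symm⟩
  by_cases hdeg : p.degree = 0
  · obtain ⟨c, hc⟩ : ∃ c, p = C c := ⟨p.coeff 0, Polynomial.eq_C_of_degree_le_zero hdeg.le⟩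
    refine ⟨1, 0, by simp, ?_⟩
    set q : k[X] := (A.map C + (X : k[X]) • B.map C).det with hq
    have hEvalq : ∀ r : k, q.eval r = (A + r • B).det := by
      intro r
      have h1 : ((A.map C + (X : k[X]) • B.map C).map (evalRingHom r)) = A + r • B := by
        ext i j
        simp only [coe_evalRingHom, Matrix.map_apply, Matrix.add_apply, Matrix.smul_apply,
          smul_eq_mul, eval_add, eval_mul, eval_X, eval_C, Pi.smul_apply]
      rw [hq, ← coe_evalRingHom, RingHom.map_det, RingHom.mapMatrix_apply, h1]
    have key : q - C c * X ^ (m+1) = 0 := by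
      apply Polynomial.eq_zero_of_infinite_isRoot
      have hsub : {r : k | r ≠ 0} ⊆ {x | IsRoot (q - C c * X ^ (m+1)) x} := by
        intro r hr
        have h2 : q.eval r = r ^ (m+1) * c := by
          rw [hEvalq r]
          have h3 : A + r • B = r • (r⁻¹ • A + B) := by
            rw [smul_add, smul_smul, mul_inv_cancel₀ hr, one_smul]
          rw [h3, Matrix.det_smul, ← hEval r⁻¹, hc]
          simp [Fintype.card_fin]
        show eval r (q - C c * X ^ (m+1)) = 0
        rw [eval_sub, eval_mul, eval_C, eval_pow, eval_X, h2]
        ring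
      exact Set.Infinite.mono hsub (Set.Finite.infinite_compl (Set.finite_singleton 0))
    have hq0 : q.eval 0 = 0 := by
      have h4 := sub_eq_zero.mp key
      rw [h4]
      simp
    rw [hEvalq 0] at hq0
    simpa using hq0
  · obtain ⟨r, hr⟩ := IsAlgClosed.exists_root p hdeg
    exact ⟨r, 1, by simp, by simpa [hEval r] using hr⟩

/-- The transitivity condition on `W` forces `finrank W ≥ n + 2`. -/
lemma segre_aux_finrank_ge [IsAlgClosed k] [FiniteDimensional k S]
    (hS2 : finrank k (S →ₗ[k] k) = 2) {n : ℕ}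
    (W : Submodule k ((Fin (n + 1) → k) →ₗ[k] (S →ₗ[k] k)))
    (htrans : ∀ u : Fin (n + 1) → k, u ≠ 0 → ∀ v : S →ₗ[k] k, ∃ f ∈ W, f u = v) :
    n + 2 ≤ finrank k W := by
  classical
  by_contra hlt
  push_neg at hlt
  have hle : finrank k ↥W ≤ n + 1 := by omega
  let bS : Basis (Fin 2) k (S →ₗ[k] k) := finBasisOfFinrankEq k _ hS2
  letI : AddCommGroup ↥W := @Submodule.addCommGroup k ((Fin (n + 1) → k) →ₗ[k] (S →ₗ[k] k)) _ _ _ W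
  haveI : Module.Free k ↥W := Module.Free.of_divisionRing k ↥W
  let w : Basis (Fin (finrank k ↥W)) k ↥W := finBasis k ↥W
  let A : Fin 2 → ((Fin (n+1) → k) →ₗ[k] (Fin (n+1) → k)) := fun j =>
    LinearMap.pi (fun i : Fin (n+1) =>
      if h : (i : ℕ) < finrank k ↥W then
        (bS.coord j) ∘ₗ ((w ⟨i, h⟩ : ↥W) : (Fin (n + 1) → k) →ₗ[k] (S →ₗ[k] k))
      else 0)
  obtain ⟨a, b, hab, hdet⟩ :=
    segre_exists_pair_det_eq_zero (LinearMap.toMatrix' (A 0)) (LinearMap.toMatrix' (A 1))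
  obtain ⟨u, hu, huv⟩ := Matrix.exists_mulVec_eq_zero_iff.mpr hdet
  have h3 : (a • A 0 + b • A 1) u = 0 := by
    have h4 : a • LinearMap.toMatrix' (A 0) + b • LinearMap.toMatrix' (A 1)
        = LinearMap.toMatrix' (a • A 0 + b • A 1) := by simp
    rw [h4, ← Matrix.toLin'_apply, Matrix.toLin'_toMatrix'] at huv
    exact huv
  have hbasis : ∀ i : Fin (finrank k ↥W),
      a * bS.coord 0 ((w i : (Fin (n + 1) → k) →ₗ[k] (S →ₗ[k] k)) u)
        + b * bS.coord 1 ((w i : (Fin (n + 1) → k) →ₗ[k] (S →ₗ[k] k)) u) = 0 := by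
    intro i
    have h5 := congrFun h3 ⟨i.1, lt_of_lt_of_le i.2 hle⟩
    simpa [A, LinearMap.pi_apply, i.2, smul_eq_mul] using h5
  let ψ : ↥W →ₗ[k] k :=
    { toFun := fun f => a * bS.coord 0 ((f : (Fin (n + 1) → k) →ₗ[k] (S →ₗ[k] k)) u)
        + b * bS.coord 1 ((f : (Fin (n + 1) → k) →ₗ[k] (S →ₗ[k] k)) u)
      map_add' := by
        intro f g
        simp only [Submodule.coe_add, LinearMap.add_apply, map_add]
        ring
      map_smul' := by
        intro c f
        simp only [Submodule.coe_smul, LinearMap.smul_apply, map_smul, smul_eq_mul,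
          RingHom.id_apply]
        ring }
  have hψ : ψ = 0 := w.ext fun i => by simpa [ψ] using hbasis i
  have key : ∀ f ∈ W, a * bS.coord 0 (f u) + b * bS.coord 1 (f u) = 0 := by
    intro f hf
    have h6 := LinearMap.congr_fun hψ ⟨f, hf⟩
    simpa [ψ] using h6
  by_cases ha : a = 0
  · have hb : b ≠ 0 := fun hb => hab ⟨ha, hb⟩
    obtain ⟨f, hf, hfu⟩ := htrans u hu (bS 1)
    have hk := key f hf
    rw [hfu] at hk
    simp [Basis.coord_apply, Basis.repr_self, ha] at hk
    exact hb hk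
  · obtain ⟨f, hf, hfu⟩ := htrans u hu (bS 0)
    have hk := key f hf
    rw [hfu] at hk
    simp [Basis.coord_apply, Basis.repr_self] at hk
    exact ha hk

/-- The key tangent-space computation: at a smooth point the intersection of `W` with the
tangent space of the Segre cone has codimension exactly `n` in `W`. -/
lemma segre_aux_tangent [FiniteDimensional k S]
    (hS2 : finrank k (S →ₗ[k] k) = 2) {n : ℕ}
    (W : Submodule k ((Fin (n + 1) → k) →ₗ[k] (S →ₗ[k] k)))
    (htrans : ∀ u : Fin (n + 1) → k, u ≠ 0 → ∀ v : S →ₗ[k] k, ∃ f ∈ W, f u = v)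
    (h : (Fin (n + 1) → k) →ₗ[k] k) (v : S →ₗ[k] k) (hh : h ≠ 0) (hv : v ≠ 0) :
    finrank k ↥(W ⊓ segreTangent h v) + n = finrank k ↥W := by
  classical
  set K : Submodule k (Fin (n+1) → k) := LinearMap.ker h with hKdef
  have hK : finrank k ↥K = n := by
    have hr : LinearMap.range h = ⊤ := by
      obtain ⟨x, hx⟩ := DFunLike.ne_iff.mp hh
      have hx' : h x ≠ 0 := by simpa using hx
      rw [eq_top_iff]
      rintro c -
      refine ⟨(c * (h x)⁻¹) • x, ?_⟩
      simp only [map_smul, smul_eq_mul]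
      rw [mul_assoc, inv_mul_cancel₀ hx', mul_one]
    have h1 := LinearMap.finrank_range_add_finrank_ker h
    rw [hr, finrank_top, finrank_self, Module.finrank_fin_fun, ← hKdef] at h1
    omega
  have hq : finrank k ((S →ₗ[k] k) ⧸ Submodule.span k {v}) = 1 := by
    have h1 : finrank k (Submodule.span k {v}) = 1 := finrank_span_singleton hv
    have h2 := Submodule.finrank_quotient_add_finrank (Submodule.span k {v})
    rw [hS2] at h2
    omega
  haveI : Module.Free k ↥K := Module.Free.of_divisionRing k ↥K
  haveI : Module.Finite k (↥K →ₗ[k] ((S →ₗ[k] k) ⧸ Submodule.span k {v})) := Module.Finite.linearMap k k ↥K ((S →ₗ[k] k) ⧸ Submodule.span k {v})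
  let Φ : ((Fin (n+1) → k) →ₗ[k] (S →ₗ[k] k)) →ₗ[k] (↥K →ₗ[k] ((S →ₗ[k] k) ⧸ Submodule.span k {v})) :=
    { toFun := fun f => (Submodule.span k {v}).mkQ ∘ₗ f ∘ₗ K.subtype
      map_add' := by intro f g; ext x; simp
      map_smul' := by intro c f; ext x; simp }
  have hker : LinearMap.ker Φ = segreTangent h v := by
    ext f
    show Φ f = 0 ↔ ∀ x, h x = 0 → f x ∈ Submodule.span k {v}
    constructor
    · intro hf x hx
      have h1 := LinearMap.congr_fun hf ⟨x, LinearMap.mem_ker.mpr hx⟩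
      simpa [Φ, Submodule.mkQ_apply, Submodule.Quotient.mk_eq_zero] using h1
    · intro hf
      ext x
      have h1 : f x.1 ∈ Submodule.span k {v} := hf x.1 (LinearMap.mem_ker.mp x.2)
      simpa [Φ, Submodule.mkQ_apply, Submodule.Quotient.mk_eq_zero] using h1
  have hspan : ∃ w₀, w₀ ∉ Submodule.span k {v} := by
    by_contra hc
    push_neg at hc
    have h1 : Submodule.span k {v} = ⊤ := eq_top_iff.mpr fun x _ => hc x
    have h2 : finrank k (Submodule.span k {v}) = 1 := finrank_span_singleton hv
    rw [h1, finrank_top, hS2] at h2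
    omega
  have hmap : Submodule.map Φ W = ⊤ := by
    by_contra hne
    set M := Submodule.map Φ W with hMdef
    haveI : Module.Free k ↥M := Module.Free.of_divisionRing k ↥M
    haveI : Module.Finite k (↥M →ₗ[k] ((S →ₗ[k] k) ⧸ Submodule.span k {v})) := Module.Finite.linearMap k k ↥M ((S →ₗ[k] k) ⧸ Submodule.span k {v})
    let E : ↥K →ₗ[k] (↥M →ₗ[k] ((S →ₗ[k] k) ⧸ Submodule.span k {v})) :=
      { toFun := fun x =>
          { toFun := fun g => (g : ↥K →ₗ[k] ((S →ₗ[k] k) ⧸ Submodule.span k {v})) x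
            map_add' := by intro g₁ g₂; simp
            map_smul' := by intro c g; simp }
        map_add' := by intro x y; ext g; simp
        map_smul' := by intro c x; ext g; simp }
    have hE : Function.Injective E := by
      rw [← LinearMap.ker_eq_bot, Submodule.eq_bot_iff]
      rintro x hx
      by_contra hx0
      have hx1 : (x : Fin (n+1) → k) ≠ 0 := fun h0 => hx0 (Subtype.ext h0)
      obtain ⟨w₀, hw₀⟩ := hspan
      obtain ⟨f, hf, hfu⟩ := htrans x.1 hx1 w₀
      have h1 : Φ f ∈ M := Submodule.mem_map_of_mem hf
      have h2 := LinearMap.congr_fun (LinearMap.mem_ker.mp hx) ⟨Φ f, h1⟩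
      have h3 : (Φ f) x = 0 := h2
      rw [show (Φ f) x = (Submodule.span k {v}).mkQ (f x.1) from rfl] at h3
      rw [Submodule.mkQ_apply, Submodule.Quotient.mk_eq_zero, hfu] at h3
      exact hw₀ h3
    have hcard := LinearMap.finrank_le_finrank_of_injective hE
    rw [Module.finrank_linearMap k k ↥M ((S →ₗ[k] k) ⧸ Submodule.span k {v}), hq, mul_one, hK] at hcard
    have hlt : finrank k ↥M < finrank k (↥K →ₗ[k] ((S →ₗ[k] k) ⧸ Submodule.span k {v})) := by
      have h0 := Submodule.finrank_lt_finrank_of_lt (lt_top_iff_ne_top.mpr hne)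
      rwa [finrank_top] at h0
    rw [Module.finrank_linearMap k k ↥K ((S →ₗ[k] k) ⧸ Submodule.span k {v}), hq, mul_one, hK] at hlt
    omega
  have hsup : W ⊔ segreTangent h v = ⊤ := by
    rw [← hker, eq_top_iff]
    rintro f -
    have h1 : Φ f ∈ Submodule.map Φ W := hmap ▸ Submodule.mem_top
    obtain ⟨g, hg, hgf⟩ := h1
    refine Submodule.mem_sup.mpr ⟨g, hg, f - g, ?_, by abel⟩
    rw [LinearMap.mem_ker, map_sub Φ f g, hgf, sub_self]
  have hrange : LinearMap.range Φ = ⊤ := by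
    rw [eq_top_iff, ← hmap]
    rintro x ⟨f, _, hf⟩
    exact ⟨f, hf⟩
  have h5 := LinearMap.finrank_range_add_finrank_ker (V := (Fin (n + 1) → k) →ₗ[k] (S →ₗ[k] k))
    (V₂ := ↥K →ₗ[k] ((S →ₗ[k] k) ⧸ Submodule.span k {v})) Φ
  rw [hrange, finrank_top, hker, Module.finrank_linearMap k k ↥K ((S →ₗ[k] k) ⧸ Submodule.span k {v}), hq, mul_one, hK,
    Module.finrank_linearMap k k (Fin (n+1) → k) (S →ₗ[k] k), Module.finrank_fin_fun,
    hS2] at h5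
  have h6 := Submodule.finrank_sup_add_finrank_inf_eq (V := (Fin (n + 1) → k) →ₗ[k] (S →ₗ[k] k))
    W (segreTangent h v)
  rw [hsup, finrank_top,
    Module.finrank_linearMap k k (Fin (n+1) → k) (S →ₗ[k] k), Module.finrank_fin_fun,
    hS2] at h6
  omega

end Aux

/-- **Theorem (teoremon)(iv), geometric form.**  Let `S` be `2`-dimensional and `V`
be `(n+1)`-dimensional over an algebraically closed field, and let
`T₀* ⊆ S* ⊗ V* = Hom(V, S*)` be a `t`-dimensional subspace such that for every nonzero
`u ∈ V` and every `v ∈ S*` some `f ∈ T₀*` has `f u = v`.  Then the intersection of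
`ℙ(T₀)` with the Segre variety `ℙ(S) × ℙ(V)` inside `ℙ(S ⊗ V)` — the projectivized
locus of rank-one maps in `T₀*` — is a nonempty smooth complete intersection of
dimension exactly `t - n - 1` (hence a smooth rational normal scroll of dimension
`t - n - 1` and degree `n + 1`): there exists a nonzero rank-one map `h ⊗ v ∈ T₀*`,
and at every such point the embedded Zariski tangent space
`{f ∈ T₀* | f(ker h) ⊆ ⟨v⟩}` has projective dimension exactly `t - n - 1`. -/
theorem segre_section_smooth_scroll {n t : ℕ} [IsAlgClosed k] [FiniteDimensional k S]
    (hS : finrank k S = 2)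
    (W : Submodule k ((Fin (n + 1) → k) →ₗ[k] (S →ₗ[k] k)))
    (hW : finrank k W = t)
    (htrans : ∀ u : Fin (n + 1) → k, u ≠ 0 → ∀ v : S →ₗ[k] k,
      ∃ f ∈ W, f u = v) :
    (∃ (h : (Fin (n + 1) → k) →ₗ[k] k) (v : S →ₗ[k] k),
        h ≠ 0 ∧ v ≠ 0 ∧ h.smulRight v ∈ W)
    ∧ (∀ (h : (Fin (n + 1) → k) →ₗ[k] k) (v : S →ₗ[k] k),
        h ≠ 0 → v ≠ 0 → h.smulRight v ∈ W →
        (finrank k ↥(W ⊓ segreTangent h v) : ℤ) - 1 = (t : ℤ) - n - 1) := by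
  classical
  have hS2 : finrank k (S →ₗ[k] k) = 2 := by
    rw [Module.finrank_linearMap k k S k, finrank_self, mul_one, hS]
  have hge : n + 2 ≤ t := by
    have h0 := segre_aux_finrank_ge hS2 W htrans
    rw [hW] at h0
    exact h0
  constructor
  · -- existence of a rank-one element of W
    let bS : Basis (Fin 2) k (S →ₗ[k] k) := finBasisOfFinrankEq k _ hS2
    set v₀ : S →ₗ[k] k := bS 0 with hv₀def
    have hv₀ : v₀ ≠ 0 := bS.ne_zero 0
    have hq : finrank k ((S →ₗ[k] k) ⧸ Submodule.span k {v₀}) = 1 := by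
      have h1 : finrank k (Submodule.span k {v₀}) = 1 := finrank_span_singleton hv₀
      have h2 := Submodule.finrank_quotient_add_finrank (Submodule.span k {v₀})
      rw [hS2] at h2
      omega
    let Θ₀ : ((Fin (n + 1) → k) →ₗ[k] (S →ₗ[k] k))
        →ₗ[k] ((Fin (n+1) → k) →ₗ[k] ((S →ₗ[k] k) ⧸ Submodule.span k {v₀})) :=
      { toFun := fun f => (Submodule.span k {v₀}).mkQ ∘ₗ f
        map_add' := by intro f g; ext x; simp
        map_smul' := by intro c f; ext x; simp }
    have hcodim : finrank k
        ((Fin (n+1) → k) →ₗ[k] ((S →ₗ[k] k) ⧸ Submodule.span k {v₀})) = n + 1 := by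
      rw [Module.finrank_linearMap k k (Fin (n+1) → k)
        ((S →ₗ[k] k) ⧸ Submodule.span k {v₀}), Module.finrank_fin_fun, hq, mul_one]
    have hamb : finrank k ((Fin (n + 1) → k) →ₗ[k] (S →ₗ[k] k)) = 2 * n + 2 := by
      rw [Module.finrank_linearMap k k (Fin (n + 1) → k) (S →ₗ[k] k),
        Module.finrank_fin_fun, hS2]
      ring
    have hrn := LinearMap.finrank_range_add_finrank_ker (V := (Fin (n + 1) → k) →ₗ[k] (S →ₗ[k] k))
      (V₂ := (Fin (n+1) → k) →ₗ[k] ((S →ₗ[k] k) ⧸ Submodule.span k {v₀})) Θ₀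
    rw [hamb] at hrn
    have hr1 : finrank k (LinearMap.range Θ₀) ≤ n + 1 := by
      have h0 := Submodule.finrank_le (LinearMap.range Θ₀)
      rw [hcodim] at h0
      exact h0
    have hsuple : finrank k ↥(W ⊔ LinearMap.ker Θ₀) ≤ 2 * n + 2 := by
      have h0 := Submodule.finrank_le (W ⊔ LinearMap.ker Θ₀)
      rw [hamb] at h0
      exact h0
    have hinf := Submodule.finrank_sup_add_finrank_inf_eq (V := (Fin (n + 1) → k) →ₗ[k] (S →ₗ[k] k))
      W (LinearMap.ker Θ₀)
    rw [hW] at hinf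
    have hne2 : W ⊓ LinearMap.ker Θ₀ ≠ ⊥ := by
      intro hb
      rw [hb, finrank_bot] at hinf
      omega
    obtain ⟨f₀, hf₀, hf₀ne⟩ := Submodule.exists_mem_ne_zero_of_ne_bot hne2
    obtain ⟨hf₀W, hf₀ker⟩ := Submodule.mem_inf.mp hf₀
    have hf₀span : ∀ x, f₀ x ∈ Submodule.span k {v₀} := by
      intro x
      have h1 : (Submodule.span k {v₀}).mkQ (f₀ x) = 0 :=
        LinearMap.congr_fun (LinearMap.mem_ker.mp hf₀ker) x
      rwa [Submodule.mkQ_apply, Submodule.Quotient.mk_eq_zero] at h1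
    obtain ⟨s, hs⟩ : ∃ s, v₀ s ≠ 0 := by
      by_contra hc
      push_neg at hc
      exact hv₀ (LinearMap.ext fun s => by simp [hc s])
    set w₀ : S := (v₀ s)⁻¹ • s with hw₀def
    have hw₀ : v₀ w₀ = 1 := by
      rw [hw₀def, map_smul, smul_eq_mul, inv_mul_cancel₀ hs]
    let hmap : (Fin (n+1) → k) →ₗ[k] k :=
      { toFun := fun x => f₀ x w₀
        map_add' := by intro x y; simp
        map_smul' := by intro c x; simp }
    have hsm : hmap.smulRight v₀ = f₀ := by
      apply LinearMap.ext
      intro x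
      obtain ⟨c, hc⟩ := Submodule.mem_span_singleton.mp (hf₀span x)
      rw [LinearMap.smulRight_apply]
      show (f₀ x w₀) • v₀ = f₀ x
      rw [← hc, LinearMap.smul_apply, hw₀, smul_eq_mul, mul_one]
    have hne : hmap ≠ 0 := by
      intro h0
      apply hf₀ne
      rw [← hsm, h0]
      ext x
      simp
    exact ⟨hmap, v₀, hne, hv₀, by rw [hsm]; exact hf₀W⟩
  · intro h v hh hv _
    have hdim := segre_aux_tangent hS2 W htrans h v hh hv
    rw [hW] at hdim
    omega
end
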